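/- arXiv:1412.7321 — 6 statements merged into one kernel-verified Lean document; each statement's English description precedes it below -/
import Mathlib

section
/- Fix an integer k ≥ 2. Let μ : ℝ → E be a smooth curve with μ(0) = x ∈ O, and define d : ℝ × ℝ → E by d(t,s) = Σ_{i=0}^{k-1} (t^i/i!)·(μ^(i)(0) + s·μ^(i+1)(0)) (so the i = 0 term is x + s·μ'(0), and d(t,s) ∈ O for (t,s) near (0,0) by continuity). Then ∂/∂s|_{s=0} [ ∂^{k-1}/∂t^{k-1}|_{t=0} f(d(t,s)) ] = (f∘μ)^(k)(0). -/
open Filter Topology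

section Aux

variable {E : Type*} [NormedAddCommGroup E] [NormedSpace ℝ E]

private lemma aux_top1 : ((⊤ : ℕ∞) : WithTop ℕ∞) ≠ 0 := by
  exact_mod_cast (ENat.top_ne_zero)

private lemma aux_top2 : minSmoothness ℝ 2 ≤ ((⊤ : ℕ∞) : WithTop ℕ∞) := by
  have : ((2:ℕ∞) : WithTop ℕ∞) ≤ ((⊤ : ℕ∞) : WithTop ℕ∞) := by exact_mod_cast le_top
  simpa using this

private lemma aux_top3 : ((⊤ : ℕ∞) : WithTop ℕ∞) + 1 ≤ ((⊤ : ℕ∞) : WithTop ℕ∞) := by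
  exact_mod_cast le_top

/-- `deriv` of a smooth curve is smooth. -/
private lemma aux_contDiff_deriv {c : ℝ → E} (hc : ContDiff ℝ (⊤ : ℕ∞) c) :
    ContDiff ℝ (⊤ : ℕ∞) (deriv c) :=
  (contDiff_infty_iff_deriv.mp hc).2

/-- iterated derivative of a pair of curves. -/
private lemma aux_iteratedDeriv_prod {A B : Type*} [NormedAddCommGroup A] [NormedSpace ℝ A]
    [NormedAddCommGroup B] [NormedSpace ℝ B] (n : ℕ) :
    ∀ (c : ℝ → A) (d : ℝ → B), ContDiff ℝ (⊤ : ℕ∞) c → ContDiff ℝ (⊤ : ℕ∞) d →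
    ∀ x : ℝ, iteratedDeriv n (fun t => (c t, d t)) x = (iteratedDeriv n c x, iteratedDeriv n d x) := by
  induction n with
  | zero => intro c d _ _ x; simp [iteratedDeriv_zero]
  | succ n ih =>
    intro c d hc hd x
    rw [iteratedDeriv_succ', iteratedDeriv_succ', iteratedDeriv_succ']
    have h : deriv (fun t => (c t, d t)) = fun t => (deriv c t, deriv d t) := by
      funext t
      exact (((hc.differentiable aux_top1 t).hasDerivAt).prodMk
        ((hd.differentiable aux_top1 t).hasDerivAt)).deriv
    rw [h]
    exact ih (deriv c) (deriv d) (aux_contDiff_deriv hc) (aux_contDiff_deriv hd) x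

/-- jets of the canonical polynomial curve. -/
private lemma aux_polyjet (j : ℕ) :
    ∀ (k : ℕ) (a : ℕ → E), j < k →
      iteratedDeriv j (fun t : ℝ => ∑ i ∈ Finset.range k,
        (t ^ i / (Nat.factorial i : ℝ)) • a i) 0 = a j := by
  induction j with
  | zero =>
    intro k a hk
    obtain ⟨m, rfl⟩ : ∃ m, k = m + 1 := ⟨k - 1, by omega⟩
    rw [iteratedDeriv_zero]
    rw [Finset.sum_eq_single_of_mem 0 (by simp)]
    · simp
    · intro i _ hi
      simp [zero_pow hi]
  | succ j ih =>
    intro k a hk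
    obtain ⟨m, rfl⟩ : ∃ m, k = m + 1 := ⟨k - 1, by omega⟩
    rw [iteratedDeriv_succ']
    have hder : deriv (fun t : ℝ => ∑ i ∈ Finset.range (m+1),
        (t ^ i / (Nat.factorial i : ℝ)) • a i)
        = fun t : ℝ => ∑ i ∈ Finset.range m,
            (t ^ i / (Nat.factorial i : ℝ)) • a (i+1) := by
      funext t
      have h1 : HasDerivAt (fun t : ℝ => ∑ i ∈ Finset.range (m+1),
          (t ^ i / (Nat.factorial i : ℝ)) • a i)
          (∑ i ∈ Finset.range (m+1), ((i * t ^ (i-1)) / (Nat.factorial i : ℝ)) • a i) t := by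
        apply HasDerivAt.fun_sum
        intro i _
        exact ((hasDerivAt_pow i t).div_const _).smul_const (a i)
      rw [h1.deriv, Finset.sum_range_succ']
      have hz : (((0:ℕ) * t ^ (0-1)) / (Nat.factorial 0 : ℝ)) • a 0 = 0 := by simp
      rw [hz, add_zero]
      apply Finset.sum_congr rfl
      intro i _
      congr 1
      rw [Nat.factorial_succ]
      push_cast
      rw [mul_div_mul_left _ _ (by positivity)]
    rw [hder]
    exact ih m (fun i => a (i+1)) (by omega)

/-- Two curves with the same jet at `0` give the same iterated derivatives after composing
with a function smooth near the base point. -/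
private lemma aux_jet_comp (n : ℕ) :
    ∀ {X : Type*} [NormedAddCommGroup X] [NormedSpace ℝ X]
      (Φ : X → E) (V : Set X), IsOpen V → ContDiffOn ℝ (⊤ : ℕ∞) Φ V →
      ∀ (c₁ c₂ : ℝ → X), ContDiff ℝ (⊤ : ℕ∞) c₁ → ContDiff ℝ (⊤ : ℕ∞) c₂ →
      c₁ 0 ∈ V → (∀ j ≤ n, iteratedDeriv j c₁ 0 = iteratedDeriv j c₂ 0) →
      iteratedDeriv n (fun t => Φ (c₁ t)) 0 = iteratedDeriv n (fun t => Φ (c₂ t)) 0 := by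
  induction n with
  | zero =>
    intro X _ _ Φ V hV hΦ c₁ c₂ hc₁ hc₂ hmem hjet
    have h0 : c₁ 0 = c₂ 0 := by simpa [iteratedDeriv_zero] using hjet 0 le_rfl
    simp [iteratedDeriv_zero, h0]
  | succ n ih =>
    intro X _ _ Φ V hV hΦ c₁ c₂ hc₁ hc₂ hmem hjet
    have h0 : c₁ 0 = c₂ 0 := by simpa [iteratedDeriv_zero] using hjet 0 (by omega)
    set G : X × X → E := fun p => fderiv ℝ Φ p.1 p.2 with hGdef
    have hG : ContDiffOn ℝ (⊤ : ℕ∞) G (V ×ˢ (Set.univ : Set X)) := by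
      have h1 : ContDiffOn ℝ (⊤ : ℕ∞) (fderiv ℝ Φ) V := hΦ.fderiv_of_isOpen hV aux_top3
      exact (h1.comp contDiffOn_fst (fun p hp => hp.1)).clm_apply contDiffOn_snd
    have key : ∀ c : ℝ → X, ContDiff ℝ (⊤ : ℕ∞) c → c 0 ∈ V →
        (deriv (fun t => Φ (c t))) =ᶠ[𝓝 (0:ℝ)] fun t => G (c t, deriv c t) := by
      intro c hc hcmem
      have hev : ∀ᶠ t in 𝓝 (0:ℝ), c t ∈ V :=
        hc.continuous.continuousAt.preimage_mem_nhds (hV.mem_nhds hcmem)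
      filter_upwards [hev] with t ht
      have hΦd : DifferentiableAt ℝ Φ (c t) :=
        (hΦ.contDiffAt (hV.mem_nhds ht)).differentiableAt aux_top1
      exact (hΦd.hasFDerivAt.comp_hasDerivAt t (hc.differentiable aux_top1 t).hasDerivAt).deriv
    rw [iteratedDeriv_succ', iteratedDeriv_succ']
    rw [(key c₁ hc₁ hmem).iteratedDeriv_eq n, (key c₂ hc₂ (h0 ▸ hmem)).iteratedDeriv_eq n]
    refine ih G (V ×ˢ Set.univ) (hV.prod isOpen_univ) hG
      (fun t => (c₁ t, deriv c₁ t)) (fun t => (c₂ t, deriv c₂ t))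
      (hc₁.prodMk (aux_contDiff_deriv hc₁)) (hc₂.prodMk (aux_contDiff_deriv hc₂))
      ⟨hmem, trivial⟩ ?_
    intro j hj
    rw [aux_iteratedDeriv_prod j c₁ (deriv c₁) hc₁ (aux_contDiff_deriv hc₁) 0,
        aux_iteratedDeriv_prod j c₂ (deriv c₂) hc₂ (aux_contDiff_deriv hc₂) 0]
    rw [← iteratedDeriv_succ', ← iteratedDeriv_succ']
    exact Prod.ext (hjet j (by omega)) (hjet (j+1) (by omega))

/-- slice derivative in the first variable. -/
private lemma aux_deriv_slice_t {G : ℝ × ℝ → E} {t s : ℝ} (hG : DifferentiableAt ℝ G (t, s)) :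
    deriv (fun t' => G (t', s)) t = fderiv ℝ G (t, s) (1, 0) := by
  have h : HasDerivAt (fun t' : ℝ => (t', s)) (1, 0) t :=
    (hasDerivAt_id t).prodMk (hasDerivAt_const t s)
  exact (hG.hasFDerivAt.comp_hasDerivAt t h).deriv

/-- slice derivative in the second variable. -/
private lemma aux_deriv_slice_s {G : ℝ × ℝ → E} {t s : ℝ} (hG : DifferentiableAt ℝ G (t, s)) :
    deriv (fun s' => G (t, s')) s = fderiv ℝ G (t, s) (0, 1) := by
  have h : HasDerivAt (fun s' : ℝ => (t, s')) (0, 1) s :=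
    (hasDerivAt_const s t).prodMk (hasDerivAt_id s)
  exact (hG.hasFDerivAt.comp_hasDerivAt s h).deriv

/-- Clairaut-type swap: `∂_s ∂_t^n F(0,0) = ∂_t^n ∂_s F(0,0)` for `F` smooth near `(0,0)`. -/
private lemma aux_swap {U : Set (ℝ × ℝ)} (hU : IsOpen U) (h0 : (0, 0) ∈ U) (n : ℕ) :
    ∀ G : ℝ × ℝ → E, ContDiffOn ℝ (⊤ : ℕ∞) G U →
      deriv (fun s => iteratedDeriv n (fun t => G (t, s)) 0) 0
        = iteratedDeriv n (fun t => deriv (fun s => G (t, s)) 0) 0 := by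
  obtain ⟨r, hr, hball⟩ := Metric.isOpen_iff.1 hU _ h0
  have hmem : ∀ t s : ℝ, |t| < r → |s| < r → (t, s) ∈ U := by
    intro t s ht hs
    apply hball
    rw [Metric.mem_ball, Prod.dist_eq]
    simp only [Real.dist_eq, sub_zero]
    exact max_lt ht hs
  induction n with
  | zero =>
    intro G hG
    simp [iteratedDeriv_zero]
  | succ n ih =>
    intro G hG
    set G₁ : ℝ × ℝ → E := fun p => fderiv ℝ G p (1, 0) with hG₁def
    set G₂ : ℝ × ℝ → E := fun p => fderiv ℝ G p (0, 1) with hG₂def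
    have hfd : ContDiffOn ℝ (⊤ : ℕ∞) (fderiv ℝ G) U := hG.fderiv_of_isOpen hU aux_top3
    have hG₁ : ContDiffOn ℝ (⊤ : ℕ∞) G₁ U := hfd.clm_apply contDiffOn_const
    have hG₂ : ContDiffOn ℝ (⊤ : ℕ∞) G₂ U := hfd.clm_apply contDiffOn_const
    have hdiffG : ∀ p ∈ U, DifferentiableAt ℝ G p := fun p hp =>
      (hG.contDiffAt (hU.mem_nhds hp)).differentiableAt aux_top1
    -- Step A : rewrite the inner iterated derivative
    have stepA : (fun s => iteratedDeriv (n+1) (fun t => G (t, s)) 0)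
        =ᶠ[𝓝 (0:ℝ)] fun s => iteratedDeriv n (fun t => G₁ (t, s)) 0 := by
      filter_upwards [Metric.ball_mem_nhds (0:ℝ) hr] with s hs
      rw [iteratedDeriv_succ']
      apply Filter.EventuallyEq.iteratedDeriv_eq
      filter_upwards [Metric.ball_mem_nhds (0:ℝ) hr] with t ht
      have hp : (t, s) ∈ U := hmem t s (by simpa [Real.dist_eq] using ht) (by simpa [Real.dist_eq] using hs)
      exact aux_deriv_slice_t (hdiffG _ hp)
    rw [stepA.deriv_eq, ih G₁ hG₁]
    -- Step B : pointwise symmetry near t = 0, at s = 0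
    have stepB : (fun t => deriv (fun s => G₁ (t, s)) 0)
        =ᶠ[𝓝 (0:ℝ)] deriv (fun t => deriv (fun s => G (t, s)) 0) := by
      filter_upwards [Metric.ball_mem_nhds (0:ℝ) hr] with t ht
      have hq : (t, (0:ℝ)) ∈ U := hmem t 0 (by simpa [Real.dist_eq] using ht) (by simpa using hr)
      have hfd_diff : DifferentiableAt ℝ (fderiv ℝ G) (t, 0) :=
        (hfd.contDiffAt (hU.mem_nhds hq)).differentiableAt aux_top1
      have hG₁diff : DifferentiableAt ℝ G₁ (t, 0) :=
        (hG₁.contDiffAt (hU.mem_nhds hq)).differentiableAt aux_top1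
      have hG₂diff : DifferentiableAt ℝ G₂ (t, 0) :=
        (hG₂.contDiffAt (hU.mem_nhds hq)).differentiableAt aux_top1
      have hsymm : IsSymmSndFDerivAt ℝ G (t, 0) :=
        (hG.contDiffAt (hU.mem_nhds hq)).isSymmSndFDerivAt aux_top2
      have e1 : deriv (fun s => G₁ (t, s)) 0 = fderiv ℝ G₁ (t, 0) (0, 1) :=
        aux_deriv_slice_s hG₁diff
      have e2 : fderiv ℝ G₁ (t, 0) (0, 1) = fderiv ℝ (fderiv ℝ G) (t, 0) (0, 1) (1, 0) := by
        rw [hG₁def]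
        rw [fderiv_clm_apply hfd_diff (differentiableAt_const _)]
        simp
      have e3 : fderiv ℝ (fderiv ℝ G) (t, 0) (0, 1) (1, 0)
          = fderiv ℝ (fderiv ℝ G) (t, 0) (1, 0) (0, 1) := hsymm.eq _ _
      have e4 : fderiv ℝ (fderiv ℝ G) (t, 0) (1, 0) (0, 1) = fderiv ℝ G₂ (t, 0) (1, 0) := by
        rw [hG₂def]
        rw [fderiv_clm_apply hfd_diff (differentiableAt_const _)]
        simp
      have e5 : fderiv ℝ G₂ (t, 0) (1, 0) = deriv (fun t' => G₂ (t', 0)) t :=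
        (aux_deriv_slice_t hG₂diff).symm
      have e6 : deriv (fun t' => G₂ (t', 0)) t
          = deriv (fun t' => deriv (fun s => G (t', s)) 0) t := by
        apply Filter.EventuallyEq.deriv_eq
        have hev : ∀ᶠ t' in 𝓝 t, (t', (0:ℝ)) ∈ U :=
          (continuous_id.prodMk continuous_const).continuousAt.preimage_mem_nhds
            (hU.mem_nhds hq)
        filter_upwards [hev] with t' ht'
        exact (aux_deriv_slice_s (hdiffG _ ht')).symm
      rw [e1, e2, e3, e4, e5, e6]
    rw [stepB.iteratedDeriv_eq n, ← iteratedDeriv_succ']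

end Aux

/-- **Lemma (mixed partial along the canonical 2-parameter deformation).**
Let `f` be smooth on an open set `O ⊆ E`, let `μ : ℝ → E` be a smooth curve with
`μ 0 = x ∈ O`, and set
`d t s = ∑_{i=0}^{k-1} (t^i / i!) • (μ^(i)(0) + s • μ^(i+1)(0))`.
Then `∂/∂s |_{s=0} [ ∂^{k-1}/∂t^{k-1} |_{t=0} f (d t s) ] = (f ∘ μ)^(k)(0)`. -/
theorem mixed_partial_eq_iteratedDeriv_comp
    {E : Type*} [NormedAddCommGroup E] [NormedSpace ℝ E]
    (O : Set E) (hO : IsOpen O) (f : E → E) (hf : ContDiffOn ℝ (⊤ : ℕ∞) f O)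
    (k : ℕ) (hk : 2 ≤ k)
    (μ : ℝ → E) (hμ : ContDiff ℝ (⊤ : ℕ∞) μ) (x : E) (hx : x ∈ O) (hμ0 : μ 0 = x) :
    let d : ℝ → ℝ → E := fun t s =>
      ∑ i ∈ Finset.range k,
        (t ^ i / (Nat.factorial i : ℝ)) • (iteratedDeriv i μ 0 + s • iteratedDeriv (i + 1) μ 0)
    deriv (fun s => iteratedDeriv (k - 1) (fun t => f (d t s)) 0) 0
      = iteratedDeriv k (fun t => f (μ t)) 0 := by
  intro d
  obtain ⟨m, rfl⟩ : ∃ m, k = m + 1 := ⟨k - 1, by omega⟩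
  set a : ℕ → E := fun i => iteratedDeriv i μ 0 with ha
  set P : ℝ → E := fun t => ∑ i ∈ Finset.range (m+1), (t ^ i / (Nat.factorial i : ℝ)) • a i
    with hPdef
  set Q : ℝ → E := fun t => ∑ i ∈ Finset.range (m+1), (t ^ i / (Nat.factorial i : ℝ)) • a (i+1)
    with hQdef
  have hd_eq : ∀ t s, d t s = P t + s • Q t := by
    intro t s
    simp only [d, hPdef, hQdef, ha, smul_add, Finset.sum_add_distrib, Finset.smul_sum]
    congr 1
    apply Finset.sum_congr rfl
    intro i _
    rw [smul_comm]
  have hP : ContDiff ℝ (⊤ : ℕ∞) P := by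
    apply ContDiff.sum
    intro i _
    exact ((contDiff_id.pow i).div_const _).smul contDiff_const
  have hQ : ContDiff ℝ (⊤ : ℕ∞) Q := by
    apply ContDiff.sum
    intro i _
    exact ((contDiff_id.pow i).div_const _).smul contDiff_const
  have hP0 : P 0 = x := by
    have h := aux_polyjet 0 (m+1) a (by omega)
    rw [iteratedDeriv_zero] at h
    have h2 : P 0 = a 0 := h
    rw [h2, ha]
    simp [iteratedDeriv_zero, hμ0]
  -- the 2-parameter map
  set D : ℝ × ℝ → E := fun p => P p.1 + p.2 • Q p.1 with hDdef
  have hD : ContDiff ℝ (⊤ : ℕ∞) D :=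
    (hP.comp contDiff_fst).add (contDiff_snd.smul (hQ.comp contDiff_fst))
  set U : Set (ℝ × ℝ) := D ⁻¹' O with hUdef
  have hU : IsOpen U := hO.preimage hD.continuous
  have hU0 : (0, 0) ∈ U := by
    simp only [hUdef, Set.mem_preimage, hDdef]
    simpa [hP0] using hx
  have hF : ContDiffOn ℝ (⊤ : ℕ∞) (fun p : ℝ × ℝ => f (D p)) U :=
    hf.comp hD.contDiffOn (fun p hp => hp)
  -- rewrite the statement with D
  have hgoal1 : (fun s => iteratedDeriv (m+1-1) (fun t => f (d t s)) 0)
      = fun s => iteratedDeriv m (fun t => (fun p : ℝ × ℝ => f (D p)) (t, s)) 0 := by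
    funext s
    congr 1
    funext t
    rw [hd_eq]
  rw [hgoal1]
  rw [aux_swap hU hU0 m _ hF]
  -- compute the s-derivative
  set G : E × E → E := fun p => fderiv ℝ f p.1 p.2 with hGdef
  have step2 : (fun t => deriv (fun s => (fun p : ℝ × ℝ => f (D p)) (t, s)) 0)
      =ᶠ[𝓝 (0:ℝ)] fun t => G (P t, Q t) := by
    have hev : ∀ᶠ t in 𝓝 (0:ℝ), P t ∈ O := by
      apply hP.continuous.continuousAt.preimage_mem_nhds
      rw [hP0]; exact hO.mem_nhds hx
    filter_upwards [hev] with t ht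
    have hfd : DifferentiableAt ℝ f (P t) :=
      (hf.contDiffAt (hO.mem_nhds ht)).differentiableAt aux_top1
    have hline : HasDerivAt (fun s : ℝ => P t + s • Q t) (Q t) 0 := by
      simpa using ((hasDerivAt_id (0:ℝ)).smul_const (Q t)).const_add (P t)
    have hfd' : HasFDerivAt f (fderiv ℝ f (P t)) (P t + (0:ℝ) • Q t) := by
      simpa using hfd.hasFDerivAt
    exact (hfd'.comp_hasDerivAt 0 hline).deriv
  rw [step2.iteratedDeriv_eq m]
  -- rewrite RHS
  have hμO : ∀ᶠ t in 𝓝 (0:ℝ), μ t ∈ O := by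
    apply hμ.continuous.continuousAt.preimage_mem_nhds
    rw [hμ0]; exact hO.mem_nhds hx
  have step3 : deriv (fun t => f (μ t)) =ᶠ[𝓝 (0:ℝ)] fun t => G (μ t, deriv μ t) := by
    filter_upwards [hμO] with t ht
    have hfd : DifferentiableAt ℝ f (μ t) :=
      (hf.contDiffAt (hO.mem_nhds ht)).differentiableAt aux_top1
    exact (hfd.hasFDerivAt.comp_hasDerivAt t (hμ.differentiable aux_top1 t).hasDerivAt).deriv
  rw [iteratedDeriv_succ', step3.iteratedDeriv_eq m]
  -- apply the jet lemma
  have hGsmooth : ContDiffOn ℝ (⊤ : ℕ∞) G (O ×ˢ (Set.univ : Set E)) := by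
    have h1 : ContDiffOn ℝ (⊤ : ℕ∞) (fderiv ℝ f) O := hf.fderiv_of_isOpen hO aux_top3
    exact (h1.comp contDiffOn_fst (fun p hp => hp.1)).clm_apply contDiffOn_snd
  refine aux_jet_comp m G (O ×ˢ Set.univ) (hO.prod isOpen_univ) hGsmooth
    (fun t => (P t, Q t)) (fun t => (μ t, deriv μ t))
    (hP.prodMk hQ) (hμ.prodMk (aux_contDiff_deriv hμ)) ⟨by simpa [hP0] using hx, trivial⟩ ?_
  intro j hj
  rw [aux_iteratedDeriv_prod j P Q hP hQ 0,
      aux_iteratedDeriv_prod j μ (deriv μ) hμ (aux_contDiff_deriv hμ) 0]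
  have hPj : iteratedDeriv j P 0 = a j := aux_polyjet j (m+1) a (by omega)
  have hQj : iteratedDeriv j Q 0 = a (j+1) := aux_polyjet j (m+1) (fun i => a (i+1)) (by omega)
  rw [hPj, hQj, ← iteratedDeriv_succ']
end

section
/- For every integer j with 1 ≤ j ≤ k, the mixed partial derivative ∂/∂h ∂/∂s ∂^{j-1}/∂t^{j-1} [ Σ_{i=1}^{k} f(c_i(t,s,h)) ] evaluated at t = s = h = 0 equals ∂/∂s ∂^{j}/∂t^{j} [ f(c(t,s)) ] evaluated at t = s = 0. -/
open Filter Topology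

section Aux

variable {P : Type*} [NormedAddCommGroup P] [NormedSpace ℝ P]
  {E : Type*} [NormedAddCommGroup E] [NormedSpace ℝ E]

noncomputable def dirD (v : P) (Φ : P → E) : P → E := fun p => fderiv ℝ Φ p v

noncomputable def dirDpow (v : P) : ℕ → (P → E) → P → E
  | 0 => id
  | m + 1 => fun Φ => dirD v (dirDpow v m Φ)

lemma contDiffOn_dirD {U : Set P} (hU : IsOpen U) {Φ : P → E}
    (hΦ : ContDiffOn ℝ (⊤:ℕ∞) Φ U) (v : P) : ContDiffOn ℝ (⊤:ℕ∞) (dirD v Φ) U :=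
  (hΦ.fderiv_of_isOpen hU (by exact_mod_cast le_refl _)).clm_apply contDiffOn_const

lemma contDiffOn_dirDpow {U : Set P} (hU : IsOpen U) {Φ : P → E}
    (hΦ : ContDiffOn ℝ (⊤:ℕ∞) Φ U) (v : P) (m : ℕ) :
    ContDiffOn ℝ (⊤:ℕ∞) (dirDpow v m Φ) U := by
  induction m with
  | zero => exact hΦ
  | succ m ih => exact contDiffOn_dirD hU ih v

lemma deriv_line {Φ : P → E} {p v : P} {t0 : ℝ}
    (hΦ : DifferentiableAt ℝ Φ (p + t0 • v)) :
    deriv (fun t => Φ (p + t • v)) t0 = dirD v Φ (p + t0 • v) := by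
  have hline : HasDerivAt (fun t : ℝ => p + t • v) v t0 := by
    simpa using ((hasDerivAt_id t0).smul_const v).const_add p
  have h2 := hΦ.hasFDerivAt.comp_hasDerivAt t0 hline
  simpa [dirD, Function.comp_def] using h2.deriv

lemma diffAt_of_contDiffOn {U : Set P} (hU : IsOpen U) {Φ : P → E}
    (hΦ : ContDiffOn ℝ (⊤:ℕ∞) Φ U) {p : P} (hp : p ∈ U) : DifferentiableAt ℝ Φ p :=
  (hΦ.contDiffAt (hU.mem_nhds hp)).differentiableAt (by simp)

lemma iteratedDeriv_line {U : Set P} (hU : IsOpen U) {Φ : P → E}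
    (hΦ : ContDiffOn ℝ (⊤:ℕ∞) Φ U) (v : P) (m : ℕ) :
    ∀ (p : P) (t0 : ℝ), p + t0 • v ∈ U →
      iteratedDeriv m (fun t => Φ (p + t • v)) t0 = dirDpow v m Φ (p + t0 • v) := by
  induction m with
  | zero => intro p t0 _; simp [iteratedDeriv_zero, dirDpow]
  | succ m ih =>
    intro p t0 hmem
    rw [iteratedDeriv_succ]
    have hopen : IsOpen {t : ℝ | p + t • v ∈ U} :=
      hU.preimage (by fun_prop)
    have hev : (fun t => iteratedDeriv m (fun t' => Φ (p + t' • v)) t)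
        =ᶠ[𝓝 t0] fun t => dirDpow v m Φ (p + t • v) :=
      eventuallyEq_of_mem (hopen.mem_nhds hmem) (fun t ht => ih p t ht)
    rw [hev.deriv_eq, deriv_line (diffAt_of_contDiffOn hU (contDiffOn_dirDpow hU hΦ v m) hmem)]
    rfl

lemma dirD_comm {U : Set P} (hU : IsOpen U) {Φ : P → E}
    (hΦ : ContDiffOn ℝ (⊤:ℕ∞) Φ U) (v w : P) {p : P} (hp : p ∈ U) :
    dirD v (dirD w Φ) p = dirD w (dirD v Φ) p := by
  have hat : ContDiffAt ℝ (⊤:ℕ∞) Φ p := hΦ.contDiffAt (hU.mem_nhds hp)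
  have hsym := hat.isSymmSndFDerivAt (by
    rw [minSmoothness_of_isRCLikeNormedField, show ((2:WithTop ℕ∞)) = ((2:ℕ∞) : WithTop ℕ∞) from rfl]; exact WithTop.coe_le_coe.mpr le_top)
  have hdiff : DifferentiableAt ℝ (fderiv ℝ Φ) p :=
    diffAt_of_contDiffOn hU (hΦ.fderiv_of_isOpen hU (by exact_mod_cast le_refl _)) hp
  have key : ∀ a b : P, dirD a (dirD b Φ) p = fderiv ℝ (fderiv ℝ Φ) p a b := by
    intro a b
    have : dirD a (dirD b Φ) p = fderiv ℝ (fun q => (fderiv ℝ Φ q) b) p a := rfl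
    rw [this, fderiv_clm_apply hdiff (differentiableAt_const b)]
    simp
  rw [key, key, hsym.eq]

lemma dirDpow_dirD_comm {U : Set P} (hU : IsOpen U) {Φ : P → E}
    (hΦ : ContDiffOn ℝ (⊤:ℕ∞) Φ U) (v w : P) (m : ℕ) :
    ∀ p ∈ U, dirDpow v m (dirD w Φ) p = dirD w (dirDpow v m Φ) p := by
  induction m with
  | zero => intro p _; rfl
  | succ m ih =>
    intro p hp
    have hev : dirDpow v m (dirD w Φ) =ᶠ[𝓝 p] dirD w (dirDpow v m Φ) :=
      eventuallyEq_of_mem (hU.mem_nhds hp) ih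
    show dirD v (dirDpow v m (dirD w Φ)) p = dirD w (dirD v (dirDpow v m Φ)) p
    have h1 : dirD v (dirDpow v m (dirD w Φ)) p = dirD v (dirD w (dirDpow v m Φ)) p := by
      show fderiv ℝ (dirDpow v m (dirD w Φ)) p v = fderiv ℝ (dirD w (dirDpow v m Φ)) p v
      rw [hev.fderiv_eq]
    rw [h1, dirD_comm hU (contDiffOn_dirDpow hU hΦ v m) v w hp]

end Aux

/-- **Lemma (first identity for the auxiliary curves `c_i`).**
With `c (t,s) = x + s•y + ∑_{m=1}^k t^m • ξ_m`,
`c_1 (t,s,h) = x + h•ξ_1 + s•y + ∑_{m=1}^k t^m • ξ_m` and, for `2 ≤ i ≤ k`,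
`c_i (t,s,h) = x + s•y + ∑_{m=1}^k t^m • ξ_m + (i·h·t^{i-1}) • ξ_i`,
for every `1 ≤ j ≤ k`:
`∂/∂h ∂/∂s ∂^{j-1}/∂t^{j-1} [∑_{i=1}^k f (c_i (t,s,h))] |₀ = ∂/∂s ∂^j/∂t^j [f (c (t,s))] |₀`. -/
theorem mixed_partial_sum_curves_eq_s
    {E : Type*} [NormedAddCommGroup E] [NormedSpace ℝ E]
    (O : Set E) (hO : IsOpen O) (f : E → E) (hf : ContDiffOn ℝ (⊤ : ℕ∞) f O)
    (k : ℕ) (hk : 1 ≤ k) (x : E) (hx : x ∈ O) (y : E) (ξ : ℕ → E)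
    (j : ℕ) (hj1 : 1 ≤ j) (hjk : j ≤ k) :
    let c : ℝ → ℝ → E := fun t s => x + s • y + ∑ m ∈ Finset.Icc 1 k, t ^ m • ξ m
    let cfam : ℕ → ℝ → ℝ → ℝ → E := fun i t s h =>
      if i = 1 then x + h • ξ 1 + s • y + ∑ m ∈ Finset.Icc 1 k, t ^ m • ξ m
      else x + s • y + (∑ m ∈ Finset.Icc 1 k, t ^ m • ξ m) + ((i : ℝ) * h * t ^ (i - 1)) • ξ i
    deriv (fun h =>
        deriv (fun s =>
            iteratedDeriv (j - 1) (fun t => ∑ i ∈ Finset.Icc 1 k, f (cfam i t s h)) 0) 0) 0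
      = deriv (fun s => iteratedDeriv j (fun t => f (c t s)) 0) 0 := by
  intro c cfam
  obtain ⟨n, rfl⟩ : ∃ n, j = n + 1 := ⟨j - 1, (Nat.succ_pred_eq_of_pos hj1).symm⟩
  simp only [Nat.add_sub_cancel]
  -- basic vectors written explicitly
  have hT : ∀ a b d t : ℝ, ((a, b, d) : ℝ × ℝ × ℝ) + t • ((1:ℝ), (0:ℝ), (0:ℝ)) = (a + t, b, d) := by
    intros; simp [Prod.ext_iff]
  have hS : ∀ a b d t : ℝ, ((a, b, d) : ℝ × ℝ × ℝ) + t • ((0:ℝ), (1:ℝ), (0:ℝ)) = (a, b + t, d) := by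
    intros; simp [Prod.ext_iff]
  have hH : ∀ a b d t : ℝ, ((a, b, d) : ℝ × ℝ × ℝ) + t • ((0:ℝ), (0:ℝ), (1:ℝ)) = (a, b, d + t) := by
    intros; simp [Prod.ext_iff]
  -- the global smooth curves
  have hP : ContDiff ℝ (⊤:ℕ∞) (fun p : ℝ × ℝ × ℝ => ∑ m ∈ Finset.Icc 1 k, p.1 ^ m • ξ m) :=
    ContDiff.sum fun m _ => (contDiff_fst.pow m).smul contDiff_const
  have hcont : ∀ i : ℕ, ContDiff ℝ (⊤:ℕ∞) (fun p : ℝ × ℝ × ℝ => cfam i p.1 p.2.1 p.2.2) := by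
    intro i
    by_cases hi : i = 1
    · have hb : (fun p : ℝ × ℝ × ℝ => cfam i p.1 p.2.1 p.2.2)
          = fun p : ℝ × ℝ × ℝ => x + p.2.2 • ξ 1 + p.2.1 • y
              + ∑ m ∈ Finset.Icc 1 k, p.1 ^ m • ξ m := by
        funext p; simp [cfam, hi]
      rw [hb]
      exact ((contDiff_const.add (contDiff_snd.snd.smul contDiff_const)).add
        (contDiff_snd.fst.smul contDiff_const)).add hP
    · have hb : (fun p : ℝ × ℝ × ℝ => cfam i p.1 p.2.1 p.2.2)
          = fun p : ℝ × ℝ × ℝ => x + p.2.1 • y + (∑ m ∈ Finset.Icc 1 k, p.1 ^ m • ξ m)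
              + ((i : ℝ) * p.2.2 * p.1 ^ (i - 1)) • ξ i := by
        funext p; simp [cfam, hi]
      rw [hb]
      exact ((contDiff_const.add (contDiff_snd.fst.smul contDiff_const)).add hP).add
        (((contDiff_const.mul contDiff_snd.snd).mul (contDiff_fst.pow _)).smul contDiff_const)
  have hcontc : ContDiff ℝ (⊤:ℕ∞) (fun p : ℝ × ℝ × ℝ => c p.1 p.2.1) := by
    simp only [c]
    exact (contDiff_const.add (contDiff_snd.fst.smul contDiff_const)).add hP
  -- the open set where everything is smooth
  set U : Set (ℝ × ℝ × ℝ) :=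
    ((fun p : ℝ × ℝ × ℝ => c p.1 p.2.1) ⁻¹' O) ∩
      ⋂ i ∈ Finset.Icc 1 k, ((fun p : ℝ × ℝ × ℝ => cfam i p.1 p.2.1 p.2.2) ⁻¹' O) with hUdef
  have hUopen : IsOpen U :=
    (hO.preimage hcontc.continuous).inter
      (isOpen_biInter_finset fun i _ => hO.preimage (hcont i).continuous)
  have hmemc : ∀ p ∈ U, c p.1 p.2.1 ∈ O := fun p hp => hp.1
  have hmemU : ∀ p ∈ U, ∀ i ∈ Finset.Icc 1 k, cfam i p.1 p.2.1 p.2.2 ∈ O :=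
    fun p hp i hi => Set.mem_iInter₂.1 hp.2 i hi
  have hsum0 : (∑ m ∈ Finset.Icc 1 k, (0:ℝ) ^ m • ξ m) = 0 :=
    Finset.sum_eq_zero fun m hm => by
      rw [zero_pow (by have := (Finset.mem_Icc.mp hm).1; omega), zero_smul]
  have hc00 : c 0 0 = x := by simp only [c]; rw [hsum0]; simp
  have hcf0 : ∀ i, cfam i 0 0 0 = x := by
    intro i
    by_cases hi : i = 1 <;> simp [cfam, hi, hsum0]
  have h0U : (((0:ℝ), (0:ℝ), (0:ℝ)) : ℝ × ℝ × ℝ) ∈ U := by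
    refine ⟨?_, Set.mem_iInter₂.2 fun i hi => ?_⟩
    · show c 0 0 ∈ O; rw [hc00]; exact hx
    · show cfam i 0 0 0 ∈ O; rw [hcf0 i]; exact hx
  -- the sum function
  set F : ℝ × ℝ × ℝ → E := fun p => ∑ i ∈ Finset.Icc 1 k, f (cfam i p.1 p.2.1 p.2.2) with hFdef
  have hFsmooth : ContDiffOn ℝ (⊤:ℕ∞) F U := by
    refine ContDiffOn.sum fun i hi => ?_
    exact (hf.comp ((hcont i).contDiffOn) (fun p hp => hmemU p hp i hi) :
      ContDiffOn ℝ (⊤:ℕ∞) (fun p : ℝ × ℝ × ℝ => f (cfam i p.1 p.2.1 p.2.2)) U)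
  -- pointwise identification of the h-derivative of F with the t-derivative of f ∘ c
  have hGval : ∀ t s : ℝ, ((t, s, (0:ℝ)) : ℝ × ℝ × ℝ) ∈ U →
      dirD ((0:ℝ), (0:ℝ), (1:ℝ)) F (t, s, 0) = deriv (fun t' => f (c t' s)) t := by
    intro t s htU
    have hcO : c t s ∈ O := hmemc _ htU
    have hfd : HasFDerivAt f (fderiv ℝ f (c t s)) (c t s) :=
      ((hf.contDiffAt (hO.mem_nhds hcO)).differentiableAt
        (by simp)).hasFDerivAt
    have hFd : DifferentiableAt ℝ F (t, s, 0) := diffAt_of_contDiffOn hUopen hFsmooth htU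
    have e1 : dirD ((0:ℝ), (0:ℝ), (1:ℝ)) F (t, s, 0) = deriv (fun h => F (t, s, h)) 0 := by
      have h1 : (fun h : ℝ => F (t, s, h))
          = fun h => F ((t, s, (0:ℝ)) + h • ((0:ℝ), (0:ℝ), (1:ℝ))) := by
        funext h'; rw [hH, zero_add]
      rw [h1, deriv_line (by rw [hH, add_zero]; exact hFd), hH, add_zero]
    have hterm : ∀ i ∈ Finset.Icc 1 k, HasDerivAt (fun h => f (cfam i t s h))
        (fderiv ℝ f (c t s) (((i:ℝ) * t ^ (i - 1)) • ξ i)) 0 := by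
      intro i hi
      by_cases hone : i = 1
      · subst hone
        have hcurve : HasDerivAt (fun h : ℝ => cfam 1 t s h) (ξ 1) 0 := by
          have hb : (fun h : ℝ => cfam 1 t s h) = fun h : ℝ => x + h • ξ 1 + s • y
              + ∑ m ∈ Finset.Icc 1 k, t ^ m • ξ m := by
            funext h'; simp [cfam]
          rw [hb]
          have h2 := ((((hasDerivAt_id (0:ℝ)).smul_const (ξ 1)).const_add x).add_const
            (s • y)).add_const (∑ m ∈ Finset.Icc 1 k, t ^ m • ξ m)
          simpa using h2
        have hval : cfam 1 t s 0 = c t s := by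
          simp [cfam, c]
        have hfd' : HasFDerivAt f (fderiv ℝ f (c t s)) (cfam 1 t s 0) := by
          rw [hval]; exact hfd
        have h3 := hfd'.comp_hasDerivAt 0 hcurve
        simpa [Function.comp_def] using h3
      · have hcurve : HasDerivAt (fun h : ℝ => cfam i t s h)
            (((i:ℝ) * t ^ (i - 1)) • ξ i) 0 := by
          have hb : (fun h : ℝ => cfam i t s h) = fun h : ℝ => x + s • y
              + (∑ m ∈ Finset.Icc 1 k, t ^ m • ξ m) + ((i : ℝ) * h * t ^ (i - 1)) • ξ i := by
            funext h'; simp [cfam, hone]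
          rw [hb]
          have h1 : HasDerivAt (fun h : ℝ => (i:ℝ) * h * t ^ (i - 1))
              ((i:ℝ) * t ^ (i - 1)) 0 := by
            simpa using ((hasDerivAt_id (0:ℝ)).const_mul (i:ℝ)).mul_const (t ^ (i - 1))
          simpa using (h1.smul_const (ξ i)).const_add
            (x + s • y + ∑ m ∈ Finset.Icc 1 k, t ^ m • ξ m)
        have hval : cfam i t s 0 = c t s := by
          simp [cfam, c, hone]
        have hfd' : HasFDerivAt f (fderiv ℝ f (c t s)) (cfam i t s 0) := by
          rw [hval]; exact hfd
        have h3 := hfd'.comp_hasDerivAt 0 hcurve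
        simpa [Function.comp_def] using h3
    have e2 : deriv (fun h => F (t, s, h)) 0
        = fderiv ℝ f (c t s) (∑ i ∈ Finset.Icc 1 k, ((i:ℝ) * t ^ (i - 1)) • ξ i) := by
      have h1 : (fun h : ℝ => F (t, s, h))
          = fun h => ∑ i ∈ Finset.Icc 1 k, f (cfam i t s h) := rfl
      rw [h1, (HasDerivAt.fun_sum hterm).deriv, ← map_sum]
    have hc' : HasDerivAt (fun t' => c t' s)
        (∑ m ∈ Finset.Icc 1 k, ((m:ℝ) * t ^ (m - 1)) • ξ m) t := by
      have hb : (fun t' : ℝ => c t' s) = fun t' : ℝ => x + s • y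
          + ∑ m ∈ Finset.Icc 1 k, t' ^ m • ξ m := by
        funext t'; simp [c]
      rw [hb]
      have h1 := HasDerivAt.sum (u := Finset.Icc 1 k)
        (fun m _ => (hasDerivAt_pow m t).smul_const (ξ m))
      simpa using h1.const_add (x + s • y)
    have e3 : deriv (fun t' => f (c t' s)) t
        = fderiv ℝ f (c t s) (∑ m ∈ Finset.Icc 1 k, ((m:ℝ) * t ^ (m - 1)) • ξ m) := by
      have h3 := hfd.comp_hasDerivAt t hc'
      simpa [Function.comp_def] using h3.deriv
    rw [e1, e2, e3]
  -- Step A : rewrite the LHS in directional-derivative form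
  have hhopen : IsOpen {h : ℝ | (((0:ℝ), (0:ℝ), h) : ℝ × ℝ × ℝ) ∈ U} :=
    hUopen.preimage (by fun_prop)
  have hA : ∀ h ∈ {h : ℝ | (((0:ℝ), (0:ℝ), h) : ℝ × ℝ × ℝ) ∈ U},
      deriv (fun s => iteratedDeriv n (fun t => ∑ i ∈ Finset.Icc 1 k, f (cfam i t s h)) 0) 0
        = dirD ((0:ℝ), (1:ℝ), (0:ℝ)) (dirDpow ((1:ℝ), (0:ℝ), (0:ℝ)) n F) (0, 0, h) := by
    intro h hh
    have hsopen : IsOpen {s : ℝ | (((0:ℝ), s, h) : ℝ × ℝ × ℝ) ∈ U} :=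
      hUopen.preimage (by fun_prop)
    have hev : (fun s => iteratedDeriv n (fun t => ∑ i ∈ Finset.Icc 1 k, f (cfam i t s h)) 0)
        =ᶠ[𝓝 0] fun s => dirDpow ((1:ℝ), (0:ℝ), (0:ℝ)) n F ((0:ℝ), s, h) := by
      refine eventuallyEq_of_mem (hsopen.mem_nhds hh) fun s hs => ?_
      have h1 : (fun t => ∑ i ∈ Finset.Icc 1 k, f (cfam i t s h))
          = fun t => F (((0:ℝ), s, h) + t • ((1:ℝ), (0:ℝ), (0:ℝ))) := by
        funext t; rw [hT, zero_add]
      rw [h1, iteratedDeriv_line hUopen hFsmooth _ n _ 0 (by rw [hT]; simpa using hs),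
        hT]
      norm_num
    rw [hev.deriv_eq]
    have h2 : (fun s => dirDpow ((1:ℝ), (0:ℝ), (0:ℝ)) n F ((0:ℝ), s, h))
        = fun s => dirDpow ((1:ℝ), (0:ℝ), (0:ℝ)) n F
            (((0:ℝ), (0:ℝ), h) + s • ((0:ℝ), (1:ℝ), (0:ℝ))) := by
      funext s; rw [hS, zero_add]
    rw [h2, deriv_line (diffAt_of_contDiffOn hUopen
      (contDiffOn_dirDpow hUopen hFsmooth _ n) (by rw [hS]; simpa using hh)), hS]
    norm_num
  have hLHS : deriv (fun h => deriv (fun s =>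
        iteratedDeriv n (fun t => ∑ i ∈ Finset.Icc 1 k, f (cfam i t s h)) 0) 0) 0
      = dirD ((0:ℝ), (0:ℝ), (1:ℝ)) (dirD ((0:ℝ), (1:ℝ), (0:ℝ))
          (dirDpow ((1:ℝ), (0:ℝ), (0:ℝ)) n F)) (0, 0, 0) := by
    have hev : (fun h => deriv (fun s =>
          iteratedDeriv n (fun t => ∑ i ∈ Finset.Icc 1 k, f (cfam i t s h)) 0) 0)
        =ᶠ[𝓝 0] fun h => dirD ((0:ℝ), (1:ℝ), (0:ℝ))
            (dirDpow ((1:ℝ), (0:ℝ), (0:ℝ)) n F) ((0:ℝ), (0:ℝ), h) :=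
      eventuallyEq_of_mem (hhopen.mem_nhds h0U) hA
    rw [hev.deriv_eq]
    have h2 : (fun h => dirD ((0:ℝ), (1:ℝ), (0:ℝ))
          (dirDpow ((1:ℝ), (0:ℝ), (0:ℝ)) n F) ((0:ℝ), (0:ℝ), h))
        = fun h => dirD ((0:ℝ), (1:ℝ), (0:ℝ)) (dirDpow ((1:ℝ), (0:ℝ), (0:ℝ)) n F)
            (((0:ℝ), (0:ℝ), (0:ℝ)) + h • ((0:ℝ), (0:ℝ), (1:ℝ))) := by
      funext h'; rw [hH, zero_add]
    rw [h2, deriv_line (diffAt_of_contDiffOn hUopen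
      (contDiffOn_dirD hUopen (contDiffOn_dirDpow hUopen hFsmooth _ n) _)
      (by rw [hH]; simpa using h0U)), hH]
    norm_num
  -- Step B : commute the derivatives
  have hsw1 : dirD ((0:ℝ), (0:ℝ), (1:ℝ)) (dirD ((0:ℝ), (1:ℝ), (0:ℝ))
        (dirDpow ((1:ℝ), (0:ℝ), (0:ℝ)) n F)) (((0:ℝ), (0:ℝ), (0:ℝ)) : ℝ × ℝ × ℝ)
      = dirD ((0:ℝ), (1:ℝ), (0:ℝ)) (dirD ((0:ℝ), (0:ℝ), (1:ℝ))
        (dirDpow ((1:ℝ), (0:ℝ), (0:ℝ)) n F)) ((0:ℝ), (0:ℝ), (0:ℝ)) :=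
    dirD_comm hUopen (contDiffOn_dirDpow hUopen hFsmooth _ n) _ _ h0U
  have hsw2 : dirD ((0:ℝ), (1:ℝ), (0:ℝ)) (dirD ((0:ℝ), (0:ℝ), (1:ℝ))
        (dirDpow ((1:ℝ), (0:ℝ), (0:ℝ)) n F)) (((0:ℝ), (0:ℝ), (0:ℝ)) : ℝ × ℝ × ℝ)
      = dirD ((0:ℝ), (1:ℝ), (0:ℝ)) (dirDpow ((1:ℝ), (0:ℝ), (0:ℝ)) n
        (dirD ((0:ℝ), (0:ℝ), (1:ℝ)) F)) ((0:ℝ), (0:ℝ), (0:ℝ)) := by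
    have hev : dirD ((0:ℝ), (0:ℝ), (1:ℝ)) (dirDpow ((1:ℝ), (0:ℝ), (0:ℝ)) n F)
        =ᶠ[𝓝 (((0:ℝ), (0:ℝ), (0:ℝ)) : ℝ × ℝ × ℝ)]
          dirDpow ((1:ℝ), (0:ℝ), (0:ℝ)) n (dirD ((0:ℝ), (0:ℝ), (1:ℝ)) F) :=
      eventuallyEq_of_mem (hUopen.mem_nhds h0U)
        (fun p hp => (dirDpow_dirD_comm hUopen hFsmooth _ _ n p hp).symm)
    show fderiv ℝ (dirD ((0:ℝ), (0:ℝ), (1:ℝ)) (dirDpow ((1:ℝ), (0:ℝ), (0:ℝ)) n F))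
        (((0:ℝ), (0:ℝ), (0:ℝ)) : ℝ × ℝ × ℝ) ((0:ℝ), (1:ℝ), (0:ℝ))
      = fderiv ℝ (dirDpow ((1:ℝ), (0:ℝ), (0:ℝ)) n (dirD ((0:ℝ), (0:ℝ), (1:ℝ)) F))
        (((0:ℝ), (0:ℝ), (0:ℝ)) : ℝ × ℝ × ℝ) ((0:ℝ), (1:ℝ), (0:ℝ))
    rw [hev.fderiv_eq]
  -- Step C : rewrite the RHS in directional-derivative form
  have hGsmooth : ContDiffOn ℝ (⊤:ℕ∞) (dirD ((0:ℝ), (0:ℝ), (1:ℝ)) F) U :=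
    contDiffOn_dirD hUopen hFsmooth _
  have hRHS : deriv (fun s => iteratedDeriv (n + 1) (fun t => f (c t s)) 0) 0
      = dirD ((0:ℝ), (1:ℝ), (0:ℝ)) (dirDpow ((1:ℝ), (0:ℝ), (0:ℝ)) n
          (dirD ((0:ℝ), (0:ℝ), (1:ℝ)) F)) ((0:ℝ), (0:ℝ), (0:ℝ)) := by
    have hsopen : IsOpen {s : ℝ | (((0:ℝ), s, (0:ℝ)) : ℝ × ℝ × ℝ) ∈ U} :=
      hUopen.preimage (by fun_prop)
    have hev : (fun s => iteratedDeriv (n + 1) (fun t => f (c t s)) 0)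
        =ᶠ[𝓝 0] fun s => dirDpow ((1:ℝ), (0:ℝ), (0:ℝ)) n
            (dirD ((0:ℝ), (0:ℝ), (1:ℝ)) F) ((0:ℝ), s, (0:ℝ)) := by
      refine eventuallyEq_of_mem (hsopen.mem_nhds h0U) fun s hs => ?_
      rw [iteratedDeriv_succ']
      have htopen : IsOpen {t : ℝ | ((t, s, (0:ℝ)) : ℝ × ℝ × ℝ) ∈ U} :=
        hUopen.preimage (by fun_prop)
      have hevt : (deriv fun t' => f (c t' s))
          =ᶠ[𝓝 (0:ℝ)] fun t => dirD ((0:ℝ), (0:ℝ), (1:ℝ)) F (t, s, (0:ℝ)) :=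
        eventuallyEq_of_mem (htopen.mem_nhds hs) fun t ht => (hGval t s ht).symm
      rw [Filter.EventuallyEq.iteratedDeriv_eq n hevt]
      have h1 : (fun t => dirD ((0:ℝ), (0:ℝ), (1:ℝ)) F (t, s, (0:ℝ)))
          = fun t => dirD ((0:ℝ), (0:ℝ), (1:ℝ)) F
              (((0:ℝ), s, (0:ℝ)) + t • ((1:ℝ), (0:ℝ), (0:ℝ))) := by
        funext t; rw [hT, zero_add]
      rw [h1, iteratedDeriv_line hUopen hGsmooth _ n _ 0 (by rw [hT]; simpa using hs), hT]
      norm_num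
    rw [hev.deriv_eq]
    have h2 : (fun s => dirDpow ((1:ℝ), (0:ℝ), (0:ℝ)) n
          (dirD ((0:ℝ), (0:ℝ), (1:ℝ)) F) ((0:ℝ), s, (0:ℝ)))
        = fun s => dirDpow ((1:ℝ), (0:ℝ), (0:ℝ)) n (dirD ((0:ℝ), (0:ℝ), (1:ℝ)) F)
            (((0:ℝ), (0:ℝ), (0:ℝ)) + s • ((0:ℝ), (1:ℝ), (0:ℝ))) := by
      funext s; rw [hS, zero_add]
    rw [h2, deriv_line (diffAt_of_contDiffOn hUopen
      (contDiffOn_dirDpow hUopen hGsmooth _ n) (by rw [hS]; simpa using h0U)), hS]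
    norm_num
  rw [hLHS, hRHS]
  exact hsw1.trans hsw2
end

section
/- For every p ∈ O and all u, v, w ∈ E, g(p)(Γ_M(p)(u,v), w) = h(f(p))( Γ_N(f(p))(Df(p)u, Df(p)v), Df(p)w ) + h(f(p))( D²f(p)(u,v), Df(p)w ). (This is the key computation of the pullback of the Levi-Civita Christoffel symbols along an immersion.) -/
set_option maxHeartbeats 1000000

/-- **Pullback of Levi-Civita Christoffel symbols along an immersion.**
If `f : O → V` is a smooth immersion between open subsets of real Hilbert spaces,
`h` is a smooth field of continuous symmetric bilinear forms on `V`, `g` is the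
pullback of `h` along `f`, and `Γ_M`, `Γ_N` satisfy the Koszul formulas for `g`, `h`
respectively, then for all `p ∈ O` and `u v w ∈ E`:
`g p (Γ_M p u v) w = h (f p) (Γ_N (f p) (Df p u) (Df p v)) (Df p w) + h (f p) (D²f p (u,v)) (Df p w)`. -/
theorem pullback_christoffel_koszul
    {E F : Type*}
    [NormedAddCommGroup E] [InnerProductSpace ℝ E] [CompleteSpace E]
    [NormedAddCommGroup F] [InnerProductSpace ℝ F] [CompleteSpace F]
    (O : Set E) (V : Set F) (hO : IsOpen O) (hV : IsOpen V)
    (f : E → F) (hf : ContDiffOn ℝ (⊤ : ℕ∞) f O) (hfO : Set.MapsTo f O V)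
    (hImm : ∀ p ∈ O, Function.Injective (fderiv ℝ f p))
    (h : F → (F →L[ℝ] F →L[ℝ] ℝ)) (hh : ContDiffOn ℝ (⊤ : ℕ∞) h V)
    (hhsymm : ∀ q ∈ V, ∀ a b : F, h q a b = h q b a)
    (g : E → (E →L[ℝ] E →L[ℝ] ℝ))
    (hgdef : ∀ p ∈ O, ∀ u v : E, g p u v = h (f p) (fderiv ℝ f p u) (fderiv ℝ f p v))
    (ΓM : E → (E →L[ℝ] E →L[ℝ] E)) (hΓM : ContDiffOn ℝ (⊤ : ℕ∞) ΓM O)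
    (hΓMsymm : ∀ p ∈ O, ∀ u v : E, ΓM p u v = ΓM p v u)
    (hKoszulM : ∀ p ∈ O, ∀ u v w : E,
      g p (ΓM p u v) w
        = (1 / 2) * ((fderiv ℝ g p u) v w + (fderiv ℝ g p v) u w - (fderiv ℝ g p w) u v))
    (ΓN : F → (F →L[ℝ] F →L[ℝ] F)) (hΓN : ContDiffOn ℝ (⊤ : ℕ∞) ΓN V)
    (hΓNsymm : ∀ q ∈ V, ∀ a b : F, ΓN q a b = ΓN q b a)
    (hKoszulN : ∀ q ∈ V, ∀ a b c : F,
      h q (ΓN q a b) c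
        = (1 / 2) * ((fderiv ℝ h q a) b c + (fderiv ℝ h q b) a c - (fderiv ℝ h q c) a b)) :
    ∀ p ∈ O, ∀ u v w : E,
      g p (ΓM p u v) w
        = h (f p) (ΓN (f p) (fderiv ℝ f p u) (fderiv ℝ f p v)) (fderiv ℝ f p w)
          + h (f p) (fderiv ℝ (fderiv ℝ f) p u v) (fderiv ℝ f p w) := by
  intro p hp u v w
  have hpO : O ∈ nhds p := hO.mem_nhds hp
  have hfpV : f p ∈ V := hfO hp
  have hfpVn : V ∈ nhds (f p) := hV.mem_nhds hfpV
  set A : E → (E →L[ℝ] F) := fderiv ℝ f with hAdef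
  -- differentiability facts
  have hfdiff : DifferentiableAt ℝ f p :=
    (hf.differentiableOn (by simp)).differentiableAt hpO
  have hAsm : ContDiffOn ℝ (⊤ : ℕ∞) A O := hf.fderiv_of_isOpen hO le_rfl
  have hAdiff : DifferentiableAt ℝ A p :=
    (hAsm.differentiableOn (by simp)).differentiableAt hpO
  have hhdiff : DifferentiableAt ℝ h (f p) :=
    (hh.differentiableOn (by simp)).differentiableAt hfpVn
  have hhf : DifferentiableAt ℝ (fun q => h (f q)) p := DifferentiableAt.comp (g := h) p hhdiff hfdiff
  -- second derivative
  set A' : E →L[ℝ] (E →L[ℝ] F) := fderiv ℝ A p with hA'def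
  have hA'symm : ∀ a b : E, A' a b = A' b a := by
    intro a b
    exact (hf.contDiffAt hpO).isSymmSndFDerivAt (by rw [minSmoothness_of_isRCLikeNormedField]; exact WithTop.coe_le_coe.mpr le_top) a b
  -- the smooth model G for g near p
  set G : E → (E →L[ℝ] E →L[ℝ] ℝ) :=
    fun q => (h (f q)).bilinearComp (A q) (A q) with hGdef
  have hGdiff : DifferentiableAt ℝ G p := by
    have h1 : DifferentiableAt ℝ (fun q => (h (f q)).comp (A q)) p := hhf.clm_comp hAdiff
    have hT : DifferentiableAt ℝ
        (fun S : E →L[ℝ] F => (ContinuousLinearMap.compL ℝ E F ℝ).flip S) (A p) :=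
      by apply ContinuousLinearMap.differentiableAt
    have h2 : DifferentiableAt ℝ
        (fun q => (ContinuousLinearMap.compL ℝ E F ℝ).flip (A q)) p :=
      DifferentiableAt.comp (g := fun S : E →L[ℝ] F => (ContinuousLinearMap.compL ℝ E F ℝ).flip S) p hT hAdiff
    have h3 : DifferentiableAt ℝ
        (fun q => ((ContinuousLinearMap.compL ℝ E F ℝ).flip (A q)).comp
          ((h (f q)).comp (A q))) p := h2.clm_comp h1
    apply h3.congr_of_eventuallyEq
    filter_upwards with q
    ext x y
    rfl
  have hgG : g =ᶠ[nhds p] G := by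
    filter_upwards [hpO] with q hq
    ext x y
    simpa [hGdef] using hgdef q hq x y
  have hgdiff : DifferentiableAt ℝ g p := hGdiff.congr_of_eventuallyEq hgG
  -- key: formula for fderiv g p a b c
  have key : ∀ a b c : E, fderiv ℝ g p a b c
      = fderiv ℝ h (f p) (A p a) (A p b) (A p c)
        + h (f p) (A' a b) (A p c) + h (f p) (A p b) (A' a c) := by
    intro a b c
    -- step 1: reduce to scalar-valued fderiv
    have e1 : fderiv ℝ g p a b c = fderiv ℝ (fun q => g q b c) p a := by
      have d1 : DifferentiableAt ℝ (fun q => g q b) p :=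
        hgdiff.clm_apply (differentiableAt_const b)
      have h1 : fderiv ℝ (fun q => g q b) p = (fderiv ℝ g p).flip b := by
        rw [fderiv_clm_apply hgdiff (differentiableAt_const b), fderiv_fun_const]
        ext t; simp
      have h2 : fderiv ℝ (fun q => g q b c) p = ((fderiv ℝ g p).flip b).flip c := by
        rw [fderiv_clm_apply d1 (differentiableAt_const c), fderiv_fun_const, h1]
        ext t; simp
      rw [h2]; rfl
    rw [e1]
    -- step 2: replace g by the explicit formula
    have e2 : (fun q => g q b c) =ᶠ[nhds p] (fun q => h (f q) (A q b) (A q c)) := by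
      filter_upwards [hpO] with q hq
      exact hgdef q hq b c
    rw [e2.fderiv_eq]
    -- step 3: compute the derivative of the explicit formula
    have hC : HasFDerivAt (fun q => h (f q))
        ((fderiv ℝ h (f p)).comp (A p)) p :=
      HasFDerivAt.comp (g := h) p (hhdiff.hasFDerivAt) hfdiff.hasFDerivAt
    have hAb : HasFDerivAt (fun q => A q b)
        ((ContinuousLinearMap.apply ℝ F b).comp A') p :=
      ((ContinuousLinearMap.apply ℝ F b).hasFDerivAt).comp p hAdiff.hasFDerivAt
    have hAc : HasFDerivAt (fun q => A q c)
        ((ContinuousLinearMap.apply ℝ F c).comp A') p :=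
      ((ContinuousLinearMap.apply ℝ F c).hasFDerivAt).comp p hAdiff.hasFDerivAt
    have hcb := hC.clm_apply hAb
    have hall := hcb.clm_apply hAc
    rw [hall.fderiv]
    simp
    ring
  -- symmetry of h at points of V
  have hsym := hhsymm (f p) hfpV
  -- put everything together
  rw [hKoszulM p hp u v w, key u v w, key v u w, key w u v,
    hKoszulN (f p) hfpV (A p u) (A p v) (A p w)]
  have s1 : h (f p) (A p v) (A' u w) = h (f p) (A' w u) (A p v) := by
    rw [hA'symm u w, hsym]
  have s2 : h (f p) (A p u) (A' v w) = h (f p) (A' w v) (A p u) := by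
    rw [hA'symm v w, hsym]
  have s3 : h (f p) (A' v u) (A p w) = h (f p) (A' u v) (A p w) := by
    rw [hA'symm v u]
  rw [s1, s2, s3, hsym ((A p) u) ((A' w) v)]
  ring
end

section
/- For every p ∈ O, all u, v ∈ E, and every w ∈ E, h(f(p))( Df(p)(Γ_M(p)(u,v)) − Γ_N(f(p))(Df(p)u, Df(p)v) − D²f(p)(u,v), Df(p)w ) = 0; that is, the vector Df(p)(Γ_M(p)(u,v)) − Γ_N(f(p))(Df(p)u, Df(p)v) − D²f(p)(u,v) ∈ F is h(f(p))-orthogonal to the image of Df(p). -/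
open Topology Filter

set_option maxHeartbeats 1000000 in
/-- Key derivative computation: the derivative of the pullback metric. -/
lemma pullback_metric_fderiv_apply {E F : Type*}
    [NormedAddCommGroup E] [NormedSpace ℝ E]
    [NormedAddCommGroup F] [NormedSpace ℝ F]
    {O : Set E} {V : Set F} (hO : IsOpen O) (hV : IsOpen V)
    {f : E → F} (hf : ContDiffOn ℝ (⊤ : ℕ∞) f O) (hfO : Set.MapsTo f O V)
    {h : F → (F →L[ℝ] F →L[ℝ] ℝ)} (hh : ContDiffOn ℝ (⊤ : ℕ∞) h V)
    {g : E → (E →L[ℝ] E →L[ℝ] ℝ)}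
    (hgdef : ∀ p ∈ O, ∀ u v : E, g p u v = h (f p) (fderiv ℝ f p u) (fderiv ℝ f p v))
    {p : E} (hp : p ∈ O) (u v w : E) :
    (fderiv ℝ g p u) v w
      = (fderiv ℝ h (f p) (fderiv ℝ f p u)) (fderiv ℝ f p v) (fderiv ℝ f p w)
        + h (f p) ((fderiv ℝ (fderiv ℝ f) p u) v) (fderiv ℝ f p w)
        + h (f p) (fderiv ℝ f p v) ((fderiv ℝ (fderiv ℝ f) p u) w) := by
  have hOp : O ∈ 𝓝 p := hO.mem_nhds hp
  have hqV : f p ∈ V := hfO hp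
  have hVq : V ∈ 𝓝 (f p) := hV.mem_nhds hqV
  have hfd : DifferentiableAt ℝ f p := (hf.contDiffAt hOp).differentiableAt (by simp)
  have hA : ContDiffOn ℝ (⊤ : ℕ∞) (fderiv ℝ f) O := hf.fderiv_of_isOpen hO (by exact_mod_cast le_top)
  have hAd : DifferentiableAt ℝ (fderiv ℝ f) p := (hA.contDiffAt hOp).differentiableAt (by simp)
  have hhd : DifferentiableAt ℝ h (f p) := (hh.contDiffAt hVq).differentiableAt (by simp)
  have hhf : DifferentiableAt ℝ (fun x => h (f x)) p := DifferentiableAt.comp (g := h) p hhd hfd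
  -- the φ side
  have hfA : HasFDerivAt f (fderiv ℝ f p) p := hfd.hasFDerivAt
  have hAB : HasFDerivAt (fderiv ℝ f) (fderiv ℝ (fderiv ℝ f) p) p := hAd.hasFDerivAt
  have hcH : HasFDerivAt (fun x => h (f x)) ((fderiv ℝ h (f p)).comp (fderiv ℝ f p)) p :=
    HasFDerivAt.comp (g := h) p hhd.hasFDerivAt hfA
  have hσ := hAB.clm_apply (hasFDerivAt_const v p)
  have hρ := hAB.clm_apply (hasFDerivAt_const w p)
  have hψ := hcH.clm_apply hσ
  have hφ := hψ.clm_apply hρ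
  have hev : (fun x => g x v w) =ᶠ[𝓝 p] (fun x => h (f x) (fderiv ℝ f x v) (fderiv ℝ f x w)) := by
    filter_upwards [hOp] with x hx
    exact hgdef x hx v w
  have hgvw := (hφ.congr_of_eventuallyEq hev).fderiv
  -- differentiability of g at p, through the smooth representative G
  set G : E → (E →L[ℝ] E →L[ℝ] ℝ) :=
    fun x => (((h (f x)).flip.comp (fderiv ℝ f x)).flip).comp (fderiv ℝ f x) with hGdef
  have flipdiff1 : Differentiable ℝ (fun T : F →L[ℝ] F →L[ℝ] ℝ => T.flip) :=
    (ContinuousLinearMap.flipₗᵢ ℝ F F ℝ).toContinuousLinearEquiv.toContinuousLinearMap.differentiable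
  have flipdiff2 : Differentiable ℝ (fun T : E →L[ℝ] F →L[ℝ] ℝ => T.flip) :=
    (ContinuousLinearMap.flipₗᵢ ℝ E F ℝ).toContinuousLinearEquiv.toContinuousLinearMap.differentiable
  have hflipdiff : DifferentiableAt ℝ (fun x => (h (f x)).flip) p :=
    DifferentiableAt.comp (𝕜 := ℝ) (F := F →L[ℝ] F →L[ℝ] ℝ) (G := F →L[ℝ] F →L[ℝ] ℝ) (f := fun x => h (f x)) (g := fun T : F →L[ℝ] F →L[ℝ] ℝ => T.flip) p (flipdiff1 _) hhf
  have hstep1 : DifferentiableAt ℝ (fun x => (h (f x)).flip.comp (fderiv ℝ f x)) p :=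
    hflipdiff.clm_comp hAd
  have hstep2 : DifferentiableAt ℝ (fun x => ((h (f x)).flip.comp (fderiv ℝ f x)).flip) p :=
    DifferentiableAt.comp (𝕜 := ℝ) (F := E →L[ℝ] F →L[ℝ] ℝ) (G := F →L[ℝ] E →L[ℝ] ℝ) (f := fun x => (h (f x)).flip.comp (fderiv ℝ f x)) (g := fun T : E →L[ℝ] F →L[ℝ] ℝ => T.flip) p (flipdiff2 _) hstep1
  have hGdiff : DifferentiableAt ℝ G p := hstep2.clm_comp hAd
  have hgG : g =ᶠ[𝓝 p] G := by
    filter_upwards [hOp] with x hx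
    refine ContinuousLinearMap.ext fun a => ContinuousLinearMap.ext fun b => ?_
    simp [hGdef, hgdef x hx a b]
  have hgdiff : DifferentiableAt ℝ g p := (hgG.differentiableAt_iff).2 hGdiff
  -- relate (fderiv g p u) v w to the scalar derivative
  have h1 : DifferentiableAt ℝ (fun x => g x v) p := hgdiff.clm_apply (differentiableAt_const v)
  have e1 : fderiv ℝ (fun x => g x v) p
      = (g p).comp (0 : E →L[ℝ] E) + (fderiv ℝ g p).flip v := by
    rw [fderiv_clm_apply hgdiff (differentiableAt_const v)]; simp; exact (zero_add _).symm
  have e2 : fderiv ℝ (fun x => g x v w) p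
      = ((fun x => g x v) p).comp (0 : E →L[ℝ] E) + (fderiv ℝ (fun x => g x v) p).flip w := by
    simpa using fderiv_clm_apply h1 (differentiableAt_const w)
  have key : fderiv ℝ (fun x => g x v w) p u = (fderiv ℝ g p u) v w := by
    rw [e2, e1]
    simp
  rw [← key, hgvw]
  simp
  ring


set_option maxHeartbeats 1000000 in

/-- **The Gauss-type orthogonality relation.**
Under the hypotheses of the pullback computation, for every `p ∈ O`, `u, v ∈ E` and
every `w ∈ E`, the vector `Df p (Γ_M p u v) − Γ_N (f p) (Df p u) (Df p v) − D²f p (u,v)`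
is `h (f p)`-orthogonal to the image of `Df p`. -/
theorem pullback_christoffel_orthogonal
    {E F : Type*}
    [NormedAddCommGroup E] [InnerProductSpace ℝ E] [CompleteSpace E]
    [NormedAddCommGroup F] [InnerProductSpace ℝ F] [CompleteSpace F]
    (O : Set E) (V : Set F) (hO : IsOpen O) (hV : IsOpen V)
    (f : E → F) (hf : ContDiffOn ℝ (⊤ : ℕ∞) f O) (hfO : Set.MapsTo f O V)
    (hImm : ∀ p ∈ O, Function.Injective (fderiv ℝ f p))
    (h : F → (F →L[ℝ] F →L[ℝ] ℝ)) (hh : ContDiffOn ℝ (⊤ : ℕ∞) h V)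
    (hhsymm : ∀ q ∈ V, ∀ a b : F, h q a b = h q b a)
    (g : E → (E →L[ℝ] E →L[ℝ] ℝ))
    (hgdef : ∀ p ∈ O, ∀ u v : E, g p u v = h (f p) (fderiv ℝ f p u) (fderiv ℝ f p v))
    (ΓM : E → (E →L[ℝ] E →L[ℝ] E)) (hΓM : ContDiffOn ℝ (⊤ : ℕ∞) ΓM O)
    (hΓMsymm : ∀ p ∈ O, ∀ u v : E, ΓM p u v = ΓM p v u)
    (hKoszulM : ∀ p ∈ O, ∀ u v w : E,
      g p (ΓM p u v) w
        = (1 / 2) * ((fderiv ℝ g p u) v w + (fderiv ℝ g p v) u w - (fderiv ℝ g p w) u v))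
    (ΓN : F → (F →L[ℝ] F →L[ℝ] F)) (hΓN : ContDiffOn ℝ (⊤ : ℕ∞) ΓN V)
    (hΓNsymm : ∀ q ∈ V, ∀ a b : F, ΓN q a b = ΓN q b a)
    (hKoszulN : ∀ q ∈ V, ∀ a b c : F,
      h q (ΓN q a b) c
        = (1 / 2) * ((fderiv ℝ h q a) b c + (fderiv ℝ h q b) a c - (fderiv ℝ h q c) a b)) :
    ∀ p ∈ O, ∀ u v : E, ∀ w : E,
      h (f p)
          (fderiv ℝ f p (ΓM p u v)
            - ΓN (f p) (fderiv ℝ f p u) (fderiv ℝ f p v)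
            - fderiv ℝ (fderiv ℝ f) p u v)
          (fderiv ℝ f p w) = 0 := by
  intro p hp u v w
  have hqV : f p ∈ V := hfO hp
  have hOp : O ∈ 𝓝 p := hO.mem_nhds hp
  have hA : ContDiffOn ℝ (⊤ : ℕ∞) (fderiv ℝ f) O :=
    hf.fderiv_of_isOpen hO (by exact_mod_cast le_top)
  have hAd : DifferentiableAt ℝ (fderiv ℝ f) p :=
    (hA.contDiffAt hOp).differentiableAt (by simp)
  have hBsymm : ∀ a b : E, fderiv ℝ (fderiv ℝ f) p a b = fderiv ℝ (fderiv ℝ f) p b a := by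
    intro a b
    have hev : ∀ᶠ y in 𝓝 p, HasFDerivAt f (fderiv ℝ f y) y := by
      filter_upwards [hOp] with x hx
      exact ((hf.contDiffAt (hO.mem_nhds hx)).differentiableAt
        (by simp)).hasFDerivAt
    exact second_derivative_symmetric_of_eventually hev hAd.hasFDerivAt a b
  have hsh : ∀ a b : F, h (f p) a b = h (f p) b a := hhsymm _ hqV
  have k1 := pullback_metric_fderiv_apply hO hV hf hfO hh hgdef hp u v w
  have k2 := pullback_metric_fderiv_apply hO hV hf hfO hh hgdef hp v u w
  have k3 := pullback_metric_fderiv_apply hO hV hf hfO hh hgdef hp w u v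
  have hM := hKoszulM p hp u v w
  have hN := hKoszulN (f p) hqV (fderiv ℝ f p u) (fderiv ℝ f p v) (fderiv ℝ f p w)
  have hgM : g p (ΓM p u v) w
      = h (f p) (fderiv ℝ f p (ΓM p u v)) (fderiv ℝ f p w) := hgdef p hp _ w
  have expand : h (f p)
      (fderiv ℝ f p (ΓM p u v)
        - ΓN (f p) (fderiv ℝ f p u) (fderiv ℝ f p v)
        - fderiv ℝ (fderiv ℝ f) p u v)
      (fderiv ℝ f p w)
    = h (f p) (fderiv ℝ f p (ΓM p u v)) (fderiv ℝ f p w)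
      - h (f p) (ΓN (f p) (fderiv ℝ f p u) (fderiv ℝ f p v)) (fderiv ℝ f p w)
      - h (f p) (fderiv ℝ (fderiv ℝ f) p u v) (fderiv ℝ f p w) := by
    simp
  rw [expand, ← hgM, hM, k1, k2, k3, hN]
  have f1 : h (f p) (fderiv ℝ f p v) (fderiv ℝ (fderiv ℝ f) p u w)
      = h (f p) (fderiv ℝ (fderiv ℝ f) p u w) (fderiv ℝ f p v) := hsh _ _
  have f2 : h (f p) (fderiv ℝ (fderiv ℝ f) p v u) (fderiv ℝ f p w)
      = h (f p) (fderiv ℝ (fderiv ℝ f) p u v) (fderiv ℝ f p w) := by rw [hBsymm v u]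
  have f3 : h (f p) (fderiv ℝ (fderiv ℝ f) p w u) (fderiv ℝ f p v)
      = h (f p) (fderiv ℝ (fderiv ℝ f) p u w) (fderiv ℝ f p v) := by rw [hBsymm w u]
  have f4 : h (f p) (fderiv ℝ f p u) (fderiv ℝ (fderiv ℝ f) p w v)
      = h (f p) (fderiv ℝ f p u) (fderiv ℝ (fderiv ℝ f) p v w) := by rw [hBsymm w v]
  linarith [f1, f2, f3, f4]
end

section
/- Assume the order-1 compatibility condition holds: for all x ∈ O and ξ, y ∈ E, Dg(x)(Γ_M(x)(ξ,y)) = D²g(x)(ξ,y) + Γ_N(g(x))(Dg(x)ξ, Dg(x)y). Fix (x, ξ_1, …, ξ_k) ∈ O × E^k and let μ̄ be the associated canonical curve. Then (g∘μ̄)(0) = g(x), (g∘μ̄)^(1)(0) = Dg(x)ξ_1, and for every 2 ≤ i ≤ k: (g∘μ̄)^(i)(0)/(i−1)! + N^1(v̄_1)·(g∘μ̄)^(i−1)(0)/(i−2)! + ⋯ + N^{i−1}(v̄_{i−1})·(g∘μ̄)^(1)(0) = i·Dg(x)ξ_i, where v̄_j = ( (g∘μ̄)(0), (g∘μ̄)^(1)(0),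 …, (1/j!)(g∘μ̄)^(j)(0) ). Consequently, in the adapted vector-bundle charts induced by the connections, the k-th order differential T^k g is represented by (x, ξ_1, …, ξ_k) ↦ (g(x), Dg(x)ξ_1, …, Dg(x)ξ_k), which is linear on fibres; i.e., T^k g is a vector bundle morphism. -/
/-- The induced connection-map components `M^i : O × E^i → L(E,E)` of a Christoffel
symbol `Γ`, defined recursively by `M^1(x,ξ₁)y = Γ x ξ₁ y` and, for `i ≥ 2`,
`M^i(x,ξ₁,…,ξ_i) = (1/i) • ( ∑_{j=1}^{i} D_j M^{i-1}(x,ξ₁,…,ξ_{i-1}) (j•ξ_j) + Γ x ξ₁ ∘ M^{i-1}(x,ξ₁,…,ξ_{i-1}) )`,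
where `D_1` is the partial derivative in the `x`-argument (direction `1•ξ₁`) and, for
`2 ≤ j ≤ i`, `D_j` is the partial derivative in the `ξ_{j-1}`-argument (direction `j•ξ_j`).
The tuple `(ξ₁,…,ξ_{i})` is encoded as a function `ξ : ℕ → E`; `M^i` only reads the
values `ξ 1, …, ξ i`. -/
noncomputable def inducedM {E : Type*} [NormedAddCommGroup E] [NormedSpace ℝ E]
    (Γ : E → (E →L[ℝ] E →L[ℝ] E)) : ℕ → E → (ℕ → E) → (E →L[ℝ] E)
  | 0, _, _ => 0
  | 1, x, ξ => Γ x (ξ 1)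
  | (n + 2), x, ξ =>
      (((n + 2 : ℕ) : ℝ))⁻¹ •
        ((fderiv ℝ (fun x' => inducedM Γ (n + 1) x' ξ) x) ((1 : ℝ) • ξ 1)
          + (∑ j ∈ Finset.Icc 2 (n + 2),
              (fderiv ℝ (fun v => inducedM Γ (n + 1) x (Function.update ξ (j - 1) v))
                  (ξ (j - 1))) ((j : ℝ) • ξ j))
          + (Γ x (ξ 1)).comp (inducedM Γ (n + 1) x ξ))

/-- The canonical curve `μ̄_k` associated to `(x, ξ₁, …, ξ_k)` and a Christoffel symbol
`Γ`: `μ̄₁ t = x + t•ξ₁`, and for `i ≥ 2`,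
`μ̄_i t = μ̄_{i-1} t + (t^i/i) • ( i•ξ_i − ∑_{j=1}^{i-1} M^j(x, ξ₁, μ̄_{i-1}⁽²⁾(0)/2!, …, μ̄_{i-1}⁽ʲ⁾(0)/j!) (μ̄_{i-1}^{(i-j)}(0)/(i-j-1)!) )`. -/
noncomputable def canonCurve {E : Type*} [NormedAddCommGroup E] [NormedSpace ℝ E]
    (Γ : E → (E →L[ℝ] E →L[ℝ] E)) (x : E) (ξ : ℕ → E) : ℕ → ℝ → E
  | 0 => fun _ => x
  | 1 => fun t => x + t • ξ 1
  | (n + 2) => fun t =>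
      canonCurve Γ x ξ (n + 1) t
        + (t ^ (n + 2) / ((n + 2 : ℕ) : ℝ)) •
            ((((n + 2 : ℕ) : ℝ)) • ξ (n + 2)
              - ∑ j ∈ Finset.Icc 1 (n + 1),
                  (inducedM Γ j x
                      (fun m => ((Nat.factorial m : ℝ))⁻¹ •
                        iteratedDeriv m (canonCurve Γ x ξ (n + 1)) 0))
                    (((Nat.factorial (n + 1 - j) : ℝ))⁻¹ •
                      iteratedDeriv (n + 2 - j) (canonCurve Γ x ξ (n + 1)) 0))

set_option linter.unusedSectionVars false
set_option maxHeartbeats 1000000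

namespace TkgAux

variable {F : Type*} [NormedAddCommGroup F] [NormedSpace ℝ F]

/-- encode a tuple `(ξ₁,…,ξ_K)` given as `Fin K → F` as a function `ℕ → F`. -/
def tup (K : ℕ) (v : Fin K → F) : ℕ → F := fun m =>
  if h : 1 ≤ m ∧ m ≤ K then v ⟨m - 1, by omega⟩ else 0

lemma tup_eq {K m : ℕ} (hm : 1 ≤ m) (hmK : m ≤ K) (v : Fin K → F) :
    tup K v m = v ⟨m - 1, by omega⟩ := dif_pos ⟨hm, hmK⟩

lemma tup_update {K : ℕ} (v : Fin K → F) (m : ℕ) (hm : 1 ≤ m) (hmK : m ≤ K) (w : F) :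
    tup K (Function.update v ⟨m - 1, by omega⟩ w) = Function.update (tup K v) m w := by
  funext r
  rcases eq_or_ne r m with rfl | hrm
  · rw [tup_eq hm hmK, Function.update_self, Function.update_self]
  · rw [Function.update_of_ne hrm]
    by_cases h : 1 ≤ r ∧ r ≤ K
    · rw [tup_eq h.1 h.2, tup_eq h.1 h.2, Function.update_of_ne]
      simp only [ne_eq, Fin.mk.injEq]
      omega
    · unfold tup
      rw [dif_neg h, dif_neg h]

variable (Γ : F → F →L[ℝ] F →L[ℝ] F)

lemma inducedM_one (x : F) (ξ : ℕ → F) : inducedM Γ 1 x ξ = Γ x (ξ 1) := rfl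

lemma inducedM_congr : ∀ (i : ℕ) (x : F) (ξ ξ' : ℕ → F),
    (∀ m, 1 ≤ m → m ≤ i → ξ m = ξ' m) → inducedM Γ i x ξ = inducedM Γ i x ξ'
  | 0, x, ξ, ξ', _ => rfl
  | 1, x, ξ, ξ', h => by
      rw [inducedM_one, inducedM_one, h 1 le_rfl le_rfl]
  | (n + 2), x, ξ, ξ', h => by
      have IH : ∀ (x : F) (ξ ξ' : ℕ → F), (∀ m, 1 ≤ m → m ≤ n + 1 → ξ m = ξ' m) →
          inducedM Γ (n + 1) x ξ = inducedM Γ (n + 1) x ξ' :=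
        fun x ξ ξ' h => inducedM_congr (n + 1) x ξ ξ' h
      show (((n + 2 : ℕ) : ℝ))⁻¹ •
        ((fderiv ℝ (fun x' => inducedM Γ (n + 1) x' ξ) x) ((1 : ℝ) • ξ 1)
          + (∑ j ∈ Finset.Icc 2 (n + 2),
              (fderiv ℝ (fun v => inducedM Γ (n + 1) x (Function.update ξ (j - 1) v))
                  (ξ (j - 1))) ((j : ℝ) • ξ j))
          + (Γ x (ξ 1)).comp (inducedM Γ (n + 1) x ξ)) = _
      have h1 : ξ 1 = ξ' 1 := h 1 le_rfl (by omega)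
      have hfun : (fun x' => inducedM Γ (n + 1) x' ξ) = fun x' => inducedM Γ (n + 1) x' ξ' := by
        funext x'
        exact IH x' ξ ξ' fun m hm hm' => h m hm (by omega)
      have hsum : (∑ j ∈ Finset.Icc 2 (n + 2),
              (fderiv ℝ (fun v => inducedM Γ (n + 1) x (Function.update ξ (j - 1) v))
                  (ξ (j - 1))) ((j : ℝ) • ξ j)) =
          (∑ j ∈ Finset.Icc 2 (n + 2),
              (fderiv ℝ (fun v => inducedM Γ (n + 1) x (Function.update ξ' (j - 1) v))
                  (ξ' (j - 1))) ((j : ℝ) • ξ' j)) := by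
        refine Finset.sum_congr rfl fun j hj => ?_
        rw [Finset.mem_Icc] at hj
        have e1 : (fun v => inducedM Γ (n + 1) x (Function.update ξ (j - 1) v)) =
            fun v => inducedM Γ (n + 1) x (Function.update ξ' (j - 1) v) := by
          funext v
          refine IH x _ _ fun m hm hm' => ?_
          rcases eq_or_ne m (j - 1) with rfl | hne
          · rw [Function.update_self, Function.update_self]
          · rw [Function.update_of_ne hne, Function.update_of_ne hne]
            exact h m hm (by omega)
        rw [e1, h (j - 1) (by omega) (by omega), h j (by omega) (by omega)]
      rw [h1, hfun, hsum, IH x ξ ξ' fun m hm hm' => h m hm (by omega)]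
      rfl

/-- `inducedM` as a map on `F × (Fin K → F)`. -/
noncomputable def Phi (K i : ℕ) (p : F × (Fin K → F)) : F →L[ℝ] F := inducedM Γ i p.1 (tup K p.2)

lemma Phi_update_junk {K i : ℕ} (x : F) (v : Fin K → F) (l : Fin K) (hl : i ≤ (l : ℕ)) (z : F) :
    Phi Γ K i (x, Function.update v l z) = Phi Γ K i (x, v) := by
  refine inducedM_congr Γ i x _ _ fun m hm hmi => ?_
  by_cases h : 1 ≤ m ∧ m ≤ K
  · rw [tup_eq h.1 h.2, tup_eq h.1 h.2]
    dsimp only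
    rw [Function.update_of_ne (Fin.ne_of_val_ne (show m - 1 ≠ (l : ℕ) by omega))]
  · unfold tup; rw [dif_neg h, dif_neg h]

end TkgAux

namespace TkgAux2
open TkgAux
variable {F : Type*} [NormedAddCommGroup F] [NormedSpace ℝ F]
variable (Γ : F → F →L[ℝ] F →L[ℝ] F)

lemma hle1 : ((⊤:ℕ∞) : WithTop ℕ∞) ≠ 0 := by simp
lemma hletop : ((⊤:ℕ∞) : WithTop ℕ∞) + 1 ≤ ((⊤:ℕ∞) : WithTop ℕ∞) := by simp

lemma single_clm_apply {K : ℕ} (l : Fin K) (z : F) :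
    (ContinuousLinearMap.pi ((Pi.single l (ContinuousLinearMap.id ℝ F)) : ∀ _ : Fin K, F →L[ℝ] F)) z = Pi.single l z := by
  funext r
  rw [ContinuousLinearMap.pi_apply]
  rcases eq_or_ne r l with rfl | h
  · simp
  · simp [Pi.single_apply, h]

variable {O : Set F}

/-- direction vectors for slot partial derivatives -/
noncomputable def sdirD (K : ℕ) (v : Fin K → F) (j : ℕ) : Fin K → F :=
  if h : 2 ≤ j ∧ j ≤ K then Pi.single (⟨j-2, by omega⟩ : Fin K) ((j:ℝ) • tup K v j) else 0

/-- The derivative-representation of `inducedM (n+2)` through the total derivative of `Phi`. -/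
lemma phi_rep {K n : ℕ} (hK : n + 2 ≤ K) (hO : IsOpen O)
    (hPhi : ContDiffOn ℝ (⊤:ℕ∞) (Phi Γ K (n+1)) (O ×ˢ Set.univ))
    {x : F} (hx : x ∈ O) (v : Fin K → F) :
    Phi Γ K (n+2) (x, v) = (((n + 2 : ℕ) : ℝ))⁻¹ •
      ((fderiv ℝ (Phi Γ K (n+1)) (x, v))
          (tup K v 1, fun l : Fin K =>
            if (l:ℕ) + 2 ≤ n + 2 then (((l:ℕ) + 2 : ℕ) : ℝ) • tup K v ((l:ℕ)+2) else 0)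
        + (Γ x (tup K v 1)).comp (Phi Γ K (n+1) (x, v))) := by
  classical
  have hop : IsOpen (O ×ˢ (Set.univ : Set (Fin K → F))) := hO.prod isOpen_univ
  have hmem : (x, v) ∈ O ×ˢ (Set.univ : Set (Fin K → F)) := ⟨hx, trivial⟩
  have hdiff : DifferentiableAt ℝ (Phi Γ K (n+1)) (x, v) :=
    ((hPhi.differentiableOn hle1).differentiableAt (hop.mem_nhds hmem))
  set Dp := fderiv ℝ (Phi Γ K (n+1)) (x, v) with hDp
  have hP : HasFDerivAt (Phi Γ K (n+1)) Dp (x, v) := hdiff.hasFDerivAt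
  -- x-partial
  have hxc : HasFDerivAt (fun x' => Phi Γ K (n+1) (x', v))
      (Dp.comp ((ContinuousLinearMap.id ℝ F).prod 0)) x :=
    hP.comp (f := fun x' => (x', v)) x ((hasFDerivAt_id x).prodMk (hasFDerivAt_const v x))
  have ex : fderiv ℝ (fun x' => inducedM Γ (n+1) x' (tup K v)) x
      = Dp.comp ((ContinuousLinearMap.id ℝ F).prod 0) := HasFDerivAt.fderiv (by exact hxc)
  -- slot partials
  have hsum : ∀ j ∈ Finset.Icc 2 (n+2),
      (fderiv ℝ (fun w => inducedM Γ (n+1) x (Function.update (tup K v) (j-1) w))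
        (tup K v (j-1))) ((j:ℝ) • tup K v j) = Dp (0, sdirD K v j) := by
    intro j hj
    rw [Finset.mem_Icc] at hj
    have h2j : 2 ≤ j := hj.1
    have hjK : j ≤ K := le_trans hj.2 hK
    set l : Fin K := ⟨j-2, by omega⟩ with hl
    have e1 : ∀ w, Function.update (tup K v) (j-1) w = tup K (Function.update v l w) := by
      intro w
      have := tup_update v (j-1) (by omega : 1 ≤ j - 1) (by omega : j - 1 ≤ K) w
      rw [← this]
      congr 1
    have hptv : tup K v (j-1) = v l := by
      rw [tup_eq (by omega : 1 ≤ j - 1) (by omega : j - 1 ≤ K)]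
      exact congrArg v (Fin.ext rfl)
    set L : F →L[ℝ] (Fin K → F) := ContinuousLinearMap.pi ((Pi.single l (ContinuousLinearMap.id ℝ F)) : ∀ _ : Fin K, F →L[ℝ] F)
    have hupd : HasFDerivAt (fun w => (x, Function.update v l w))
        ((0 : F →L[ℝ] F).prod L) (v l) :=
      (hasFDerivAt_const x _).prodMk (hasFDerivAt_update (i := l) v (v l))
    have hP' : HasFDerivAt (Phi Γ K (n+1)) Dp ((x, Function.update v l (v l))) := by
      rw [Function.update_eq_self]
      exact hP
    have hcomp : HasFDerivAt (fun w => Phi Γ K (n+1) (x, Function.update v l w))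
        (Dp.comp ((0 : F →L[ℝ] F).prod L)) (v l) := hP'.comp (f := fun w => (x, Function.update v l w)) (v l) hupd
    have e2 : fderiv ℝ (fun w => inducedM Γ (n+1) x (Function.update (tup K v) (j-1) w))
        (tup K v (j-1)) = Dp.comp ((0 : F →L[ℝ] F).prod L) := by
      rw [hptv]
      refine HasFDerivAt.fderiv (HasFDerivAt.congr_of_eventuallyEq hcomp
        (Filter.Eventually.of_forall fun w => ?_))
      show inducedM Γ (n+1) x (Function.update (tup K v) (j-1) w)
        = Phi Γ K (n+1) (x, Function.update v l w)
      rw [e1 w]; rfl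
    rw [e2]
    have e3 : sdirD K v j = Pi.single l ((j:ℝ) • tup K v j) := by
      unfold sdirD; exact dif_pos ⟨h2j, hjK⟩
    rw [e3]
    have : L ((j:ℝ) • tup K v j) = Pi.single l ((j:ℝ) • tup K v j) := single_clm_apply l _
    simp only [ContinuousLinearMap.comp_apply, ContinuousLinearMap.prod_apply,
      ContinuousLinearMap.zero_apply, this]
  -- assemble
  have lhs_eq : Phi Γ K (n+2) (x, v) = (((n + 2 : ℕ) : ℝ))⁻¹ •
        ((fderiv ℝ (fun x' => inducedM Γ (n+1) x' (tup K v)) x) ((1 : ℝ) • tup K v 1)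
          + (∑ j ∈ Finset.Icc 2 (n + 2),
              (fderiv ℝ (fun w => inducedM Γ (n+1) x (Function.update (tup K v) (j - 1) w))
                  (tup K v (j - 1))) ((j : ℝ) • tup K v j))
          + (Γ x (tup K v 1)).comp (inducedM Γ (n+1) x (tup K v))) := rfl
  rw [lhs_eq, ex, Finset.sum_congr rfl hsum]
  have hinr : ∀ w : Fin K → F, Dp (0, w) = (Dp.comp (ContinuousLinearMap.inr ℝ F (Fin K → F))) w := by
    intro w; simp
  have hsum2 : (∑ j ∈ Finset.Icc 2 (n+2), Dp (0, sdirD K v j))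
      = Dp (0, ∑ j ∈ Finset.Icc 2 (n+2), sdirD K v j) := by
    simp_rw [hinr]
    rw [← map_sum]
  have hdir : (∑ j ∈ Finset.Icc 2 (n+2), sdirD K v j)
      = fun l : Fin K => if (l:ℕ) + 2 ≤ n + 2 then (((l:ℕ) + 2 : ℕ) : ℝ) • tup K v ((l:ℕ)+2) else 0 := by
    funext l
    rw [Finset.sum_apply]
    by_cases hc : (l:ℕ) + 2 ≤ n + 2
    · rw [if_pos hc]
      rw [Finset.sum_eq_single ((l:ℕ)+2)]
      · unfold sdirD
        rw [dif_pos ⟨by omega, by omega⟩]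
        have : (⟨(l:ℕ)+2-2, by omega⟩ : Fin K) = l := Fin.ext (show (l:ℕ)+2-2 = (l:ℕ) by omega)
        rw [this, Pi.single_eq_same]
      · intro b hb hbne
        rw [Finset.mem_Icc] at hb
        unfold sdirD
        rw [dif_pos ⟨hb.1, by omega⟩]
        exact Pi.single_eq_of_ne (Fin.ne_of_val_ne (show (l:ℕ) ≠ b - 2 by omega)) _
      · intro hnot
        exact absurd (Finset.mem_Icc.2 ⟨by omega, hc⟩) hnot
    · rw [if_neg hc]
      refine Finset.sum_eq_zero fun b hb => ?_
      rw [Finset.mem_Icc] at hb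
      unfold sdirD
      rw [dif_pos ⟨hb.1, by omega⟩]
      exact Pi.single_eq_of_ne (Fin.ne_of_val_ne (show (l:ℕ) ≠ b - 2 by omega)) _
  rw [hsum2, hdir]
  have hcombine : Dp ((1:ℝ) • tup K v 1, 0)
      + Dp (0, fun l : Fin K => if (l:ℕ) + 2 ≤ n + 2 then (((l:ℕ) + 2 : ℕ) : ℝ) • tup K v ((l:ℕ)+2) else 0)
      = Dp (tup K v 1, fun l : Fin K => if (l:ℕ) + 2 ≤ n + 2 then (((l:ℕ) + 2 : ℕ) : ℝ) • tup K v ((l:ℕ)+2) else 0) := by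
    rw [← map_add, Prod.mk_add_mk, add_zero, zero_add, one_smul]
  have happ : (Dp.comp ((ContinuousLinearMap.id ℝ F).prod 0)) ((1:ℝ) • tup K v 1)
      = Dp ((1:ℝ) • tup K v 1, 0) := by
    simp only [ContinuousLinearMap.comp_apply, ContinuousLinearMap.prod_apply,
      ContinuousLinearMap.coe_id', id, ContinuousLinearMap.zero_apply]
  rw [happ, hcombine]
  rfl

end TkgAux2

namespace TkgAux2
open TkgAux
variable {F : Type*} [NormedAddCommGroup F] [NormedSpace ℝ F]
variable (Γ : F → F →L[ℝ] F →L[ℝ] F)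
variable {O : Set F}

lemma fderiv_phi_single_zero {K i : ℕ} (hO : IsOpen O)
    (hPhi : ContDiffOn ℝ (⊤:ℕ∞) (Phi Γ K i) (O ×ˢ Set.univ))
    {x : F} (hx : x ∈ O) (v : Fin K → F) (l : Fin K) (hl : i ≤ (l:ℕ)) (z : F) :
    fderiv ℝ (Phi Γ K i) (x, v) (0, Pi.single l z) = 0 := by
  have hop : IsOpen (O ×ˢ (Set.univ : Set (Fin K → F))) := hO.prod isOpen_univ
  have hmem : (x, v) ∈ O ×ˢ (Set.univ : Set (Fin K → F)) := ⟨hx, trivial⟩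
  have hdiff : DifferentiableAt ℝ (Phi Γ K i) (x, v) :=
    ((hPhi.differentiableOn hle1).differentiableAt (hop.mem_nhds hmem))
  set Dp := fderiv ℝ (Phi Γ K i) (x, v) with hDp
  have hP : HasFDerivAt (Phi Γ K i) Dp (x, v) := hdiff.hasFDerivAt
  set L : F →L[ℝ] (Fin K → F) :=
    ContinuousLinearMap.pi ((Pi.single l (ContinuousLinearMap.id ℝ F)) : ∀ _ : Fin K, F →L[ℝ] F)
  have hupd : HasFDerivAt (fun w => (x, Function.update v l w))
      ((0 : F →L[ℝ] F).prod L) (v l) :=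
    (hasFDerivAt_const x _).prodMk (hasFDerivAt_update (i := l) v (v l))
  have hP' : HasFDerivAt (Phi Γ K i) Dp ((x, Function.update v l (v l))) := by
    rw [Function.update_eq_self]; exact hP
  have h1 : HasFDerivAt (fun w => Phi Γ K i (x, Function.update v l w))
      (Dp.comp ((0 : F →L[ℝ] F).prod L)) (v l) := hP'.comp (f := fun w => (x, Function.update v l w)) (v l) hupd
  have h2 : HasFDerivAt (fun w => Phi Γ K i (x, Function.update v l w))
      (0 : F →L[ℝ] F →L[ℝ] F) (v l) := by
    have e : (fun w => Phi Γ K i (x, Function.update v l w)) = fun _ => Phi Γ K i (x, v) :=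
      funext fun w => Phi_update_junk Γ x v l hl w
    rw [e]
    exact hasFDerivAt_const _ _
  have h3 : Dp.comp ((0 : F →L[ℝ] F).prod L) = 0 := h1.unique h2
  have h4 : (Dp.comp ((0 : F →L[ℝ] F).prod L)) z = 0 := by rw [h3]; rfl
  rw [← h4]
  have h5 : L z = Pi.single l z := single_clm_apply l z
  simp only [ContinuousLinearMap.comp_apply, ContinuousLinearMap.prod_apply,
    ContinuousLinearMap.zero_apply, h5]

lemma fderiv_phi_dir_congr {K i : ℕ} (hO : IsOpen O)
    (hPhi : ContDiffOn ℝ (⊤:ℕ∞) (Phi Γ K i) (O ×ˢ Set.univ))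
    {x : F} (hx : x ∈ O) (v : Fin K → F) (y : F) (w w' : Fin K → F)
    (h : ∀ l : Fin K, (l:ℕ) < i → w l = w' l) :
    fderiv ℝ (Phi Γ K i) (x, v) (y, w) = fderiv ℝ (Phi Γ K i) (x, v) (y, w') := by
  set Dp := fderiv ℝ (Phi Γ K i) (x, v) with hDp
  have e : (y, w) = (y, w') + ((0 : F), w - w') := by
    rw [Prod.mk_add_mk, add_zero]
    congr 1
    abel
  rw [e, map_add]
  suffices hz : Dp (0, w - w') = 0 by rw [hz, add_zero]
  have hdecomp : (w - w') = ∑ l : Fin K, Pi.single l ((w - w') l) := (Finset.univ_sum_single _).symm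
  have hinr : ∀ u : Fin K → F, Dp (0, u) = (Dp.comp (ContinuousLinearMap.inr ℝ F (Fin K → F))) u := by
    intro u; simp
  rw [hdecomp, hinr, map_sum]
  refine Finset.sum_eq_zero fun l _ => ?_
  rw [← hinr]
  rcases lt_or_ge (l:ℕ) i with hli | hli
  · have : (w - w') l = 0 := by rw [Pi.sub_apply, h l hli, sub_self]
    rw [this]
    simp only [Pi.single_zero]; exact map_zero Dp
  · exact fderiv_phi_single_zero Γ hO hPhi hx v l hli _

lemma phi_contDiffOn (hO : IsOpen O) (hΓ : ContDiffOn ℝ (⊤:ℕ∞) Γ O) :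
    ∀ (i K : ℕ), i ≤ K → 1 ≤ K → ContDiffOn ℝ (⊤:ℕ∞) (Phi Γ K i) (O ×ˢ Set.univ)
  | 0, K, _, _ => by
      have e : Phi Γ K 0 = fun _ => (0 : F →L[ℝ] F) := rfl
      rw [e]; exact contDiffOn_const
  | 1, K, h1, hK => by
      have hproj : ContDiff ℝ (⊤:ℕ∞) (fun p : F × (Fin K → F) => p.2 ⟨0, by omega⟩) :=
        ((ContinuousLinearMap.proj (R := ℝ) (⟨0, by omega⟩ : Fin K)).comp
          (ContinuousLinearMap.snd ℝ F (Fin K → F))).contDiff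
      have hsmooth : ContDiffOn ℝ (⊤:ℕ∞)
          (fun p : F × (Fin K → F) => Γ p.1 (p.2 ⟨0, by omega⟩)) (O ×ˢ Set.univ) := by
        refine ContDiffOn.clm_apply ?_ hproj.contDiffOn
        exact hΓ.comp (contDiff_fst.contDiffOn) (fun p hp => hp.1)
      refine hsmooth.congr fun p hp => ?_
      show Γ p.1 (tup K p.2 1) = _
      rw [tup_eq le_rfl hK]
  | (n+2), K, hK2, hK1 => by
      have IH : ContDiffOn ℝ (⊤:ℕ∞) (Phi Γ K (n+1)) (O ×ˢ Set.univ) :=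
        phi_contDiffOn hO hΓ (n+1) K (by omega) hK1
      have hop : IsOpen (O ×ˢ (Set.univ : Set (Fin K → F))) := hO.prod isOpen_univ
      -- the continuous linear direction map
      set D : (F × (Fin K → F)) →L[ℝ] F × (Fin K → F) :=
        (((ContinuousLinearMap.proj (R := ℝ) (⟨0, by omega⟩ : Fin K)).comp
            (ContinuousLinearMap.snd ℝ F (Fin K → F)))).prod
          (ContinuousLinearMap.pi (fun l : Fin K =>
            if h : (l:ℕ) + 2 ≤ n + 2 then
              (((l:ℕ) + 2 : ℕ) : ℝ) • ((ContinuousLinearMap.proj (R := ℝ)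
                  (⟨(l:ℕ) + 1, by omega⟩ : Fin K)).comp
                (ContinuousLinearMap.snd ℝ F (Fin K → F)))
            else 0)) with hD
      have hDval : ∀ p : F × (Fin K → F), D p =
          (tup K p.2 1, fun l : Fin K =>
            if (l:ℕ) + 2 ≤ n + 2 then (((l:ℕ) + 2 : ℕ) : ℝ) • tup K p.2 ((l:ℕ)+2) else 0) := by
        intro p
        rw [hD]
        refine Prod.ext ?_ ?_
        · show p.2 ⟨0, by omega⟩ = tup K p.2 1
          rw [tup_eq le_rfl (by omega)]
        · show (ContinuousLinearMap.pi _) p = _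
          funext l
          rw [ContinuousLinearMap.pi_apply]
          show _ = if (l:ℕ) + 2 ≤ n + 2 then (((l:ℕ) + 2 : ℕ) : ℝ) • tup K p.2 ((l:ℕ)+2) else (0:F)
          by_cases hc : (l:ℕ) + 2 ≤ n + 2
          · rw [dif_pos hc, if_pos hc]
            show (((l:ℕ) + 2 : ℕ) : ℝ) • p.2 ⟨(l:ℕ) + 1, by omega⟩ = _
            rw [tup_eq (by omega) (by omega : (l:ℕ) + 2 ≤ K)]
            exact congrArg _ (congrArg p.2 (Fin.ext (show (l:ℕ) + 1 = (l:ℕ) + 2 - 1 by omega)))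
          · rw [dif_neg hc, if_neg hc]
            rfl
      have hterm1 : ContDiffOn ℝ (⊤:ℕ∞)
          (fun p : F × (Fin K → F) => (fderiv ℝ (Phi Γ K (n+1)) p) (D p)) (O ×ˢ Set.univ) :=
        (IH.fderiv_of_isOpen hop hletop).clm_apply (D.contDiff.contDiffOn)
      have hproj : ContDiff ℝ (⊤:ℕ∞) (fun p : F × (Fin K → F) => p.2 ⟨0, by omega⟩) :=
        ((ContinuousLinearMap.proj (R := ℝ) (⟨0, by omega⟩ : Fin K)).comp
          (ContinuousLinearMap.snd ℝ F (Fin K → F))).contDiff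
      have hterm2 : ContDiffOn ℝ (⊤:ℕ∞)
          (fun p : F × (Fin K → F) => (Γ p.1 (p.2 ⟨0, by omega⟩)).comp (Phi Γ K (n+1) p))
          (O ×ˢ Set.univ) := by
        refine ContDiffOn.clm_comp ?_ IH
        refine ContDiffOn.clm_apply ?_ hproj.contDiffOn
        exact hΓ.comp (contDiff_fst.contDiffOn) (fun p hp => hp.1)
      have htotal := ((hterm1.add hterm2).const_smul (((n + 2 : ℕ) : ℝ))⁻¹)
      refine htotal.congr fun p hp => ?_
      have hrep := phi_rep Γ hK2 hO IH hp.1 p.2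
      have : (p.1, p.2) = p := rfl
      rw [this] at hrep
      rw [hrep, hDval p]
      rw [tup_eq le_rfl (by omega : 1 ≤ K)]

end TkgAux2

namespace TkgAux3
open TkgAux TkgAux2
variable {F : Type*} [NormedAddCommGroup F] [NormedSpace ℝ F]

/-- normalized derivative coefficients of a curve -/
noncomputable def uD (c : ℝ → F) (m : ℕ) : ℝ → F :=
  fun t => ((m.factorial : ℝ))⁻¹ • iteratedDeriv m c t

lemma fact_scalar (m : ℕ) :
    (((m+1:ℕ)):ℝ) * (((m+1).factorial:ℝ))⁻¹ = ((m.factorial:ℝ))⁻¹ := by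
  rw [Nat.factorial_succ]
  push_cast
  rw [mul_inv, ← mul_assoc, mul_inv_cancel₀ (by positivity), one_mul]

variable {c : ℝ → F} {s : Set ℝ}

lemma contDiffOn_iteratedDeriv (hs : IsOpen s) (hc : ContDiffOn ℝ (⊤:ℕ∞) c s) :
    ∀ m, ContDiffOn ℝ (⊤:ℕ∞) (iteratedDeriv m c) s
  | 0 => by rw [iteratedDeriv_zero]; exact hc
  | (m+1) => by
      have IH := contDiffOn_iteratedDeriv hs hc m
      have hf := IH.fderiv_of_isOpen hs hletop
      have h2 : ContDiffOn ℝ (⊤:ℕ∞) (fun t => fderiv ℝ (iteratedDeriv m c) t 1) s :=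
        hf.clm_apply contDiffOn_const
      refine h2.congr fun t _ => ?_
      rw [iteratedDeriv_succ]
      exact fderiv_apply_one_eq_deriv.symm

lemma hasDerivAt_iteratedDeriv (hs : IsOpen s) (hc : ContDiffOn ℝ (⊤:ℕ∞) c s)
    (m : ℕ) {t : ℝ} (ht : t ∈ s) :
    HasDerivAt (iteratedDeriv m c) (iteratedDeriv (m+1) c t) t := by
  have hd : DifferentiableAt ℝ (iteratedDeriv m c) t :=
    (((contDiffOn_iteratedDeriv hs hc m).differentiableOn hle1).differentiableAt
      (hs.mem_nhds ht))
  rw [iteratedDeriv_succ]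
  exact hd.hasDerivAt

lemma hasDerivAt_uD (hs : IsOpen s) (hc : ContDiffOn ℝ (⊤:ℕ∞) c s)
    (m : ℕ) {t : ℝ} (ht : t ∈ s) :
    HasDerivAt (uD c m) ((((m+1:ℕ)):ℝ) • uD c (m+1) t) t := by
  have h := (hasDerivAt_iteratedDeriv hs hc m ht).const_smul ((m.factorial:ℝ))⁻¹
  have e : (((m+1:ℕ)):ℝ) • uD c (m+1) t = ((m.factorial:ℝ))⁻¹ • iteratedDeriv (m+1) c t := by
    unfold uD
    rw [smul_smul, fact_scalar]
  rw [e]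
  exact h

lemma hasDerivAt_c (hs : IsOpen s) (hc : ContDiffOn ℝ (⊤:ℕ∞) c s) {t : ℝ} (ht : t ∈ s) :
    HasDerivAt c (uD c 1 t) t := by
  have h0 := hasDerivAt_iteratedDeriv hs hc 0 ht
  rw [iteratedDeriv_zero] at h0
  have : uD c 1 t = iteratedDeriv 1 c t := by
    unfold uD
    rw [Nat.factorial_one, Nat.cast_one, inv_one, one_smul]
  rw [this]
  exact h0

variable (Γ : F → F →L[ℝ] F →L[ℝ] F) {O : Set F}

lemma inducedM_eq_phi (j K : ℕ) (hjK : j ≤ K) (x : F) (w : ℕ → F) :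
    inducedM Γ j x w = Phi Γ K j (x, fun l : Fin K => w ((l:ℕ)+1)) := by
  refine inducedM_congr Γ j x _ _ fun m hm hmj => ?_
  show w m = tup K _ m
  rw [tup_eq hm (le_trans hmj hjK)]
  exact congrArg w (show m = (m-1)+1 by omega)

/-- Key recursion: the derivative of `M^{n+1}` along the curve. -/
lemma hasDerivAt_inducedM_curve (hs : IsOpen s) (hc : ContDiffOn ℝ (⊤:ℕ∞) c s)
    (hO : IsOpen O) (hΓ : ContDiffOn ℝ (⊤:ℕ∞) Γ O) (hmapsO : ∀ t ∈ s, c t ∈ O)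
    (n : ℕ) {t : ℝ} (ht : t ∈ s) :
    HasDerivAt (fun τ => inducedM Γ (n+1) (c τ) (fun m => uD c m τ))
      ((((n+2:ℕ)):ℝ) • inducedM Γ (n+2) (c t) (fun m => uD c m t)
        - (Γ (c t) (uD c 1 t)).comp (inducedM Γ (n+1) (c t) (fun m => uD c m t))) t := by
  set K := n + 2 with hK
  set V : ℝ → (Fin K → F) := fun τ l => uD c ((l:ℕ)+1) τ with hVdef
  have hPhi := phi_contDiffOn Γ hO hΓ (n+1) K (by omega) (by omega)
  have hcur : HasDerivAt (fun τ => ((c τ, V τ) : F × (Fin K → F)))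
      ((uD c 1 t, fun l : Fin K => ((((l:ℕ)+2:ℕ)):ℝ) • uD c ((l:ℕ)+2) t)) t := by
    refine HasDerivAt.prodMk (hasDerivAt_c hs hc ht) (hasDerivAt_pi.2 fun l => ?_)
    exact hasDerivAt_uD hs hc ((l:ℕ)+1) ht
  have hmem : ((c t, V t) : F × (Fin K → F)) ∈ O ×ˢ Set.univ := ⟨hmapsO t ht, trivial⟩
  have hF : HasFDerivAt (Phi Γ K (n+1)) (fderiv ℝ (Phi Γ K (n+1)) (c t, V t)) (c t, V t) :=
    (((hPhi.differentiableOn hle1).differentiableAt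
      ((hO.prod isOpen_univ).mem_nhds hmem))).hasFDerivAt
  have hcomp : HasDerivAt (fun τ => Phi Γ K (n+1) (c τ, V τ))
      (fderiv ℝ (Phi Γ K (n+1)) (c t, V t)
        (uD c 1 t, fun l : Fin K => ((((l:ℕ)+2:ℕ)):ℝ) • uD c ((l:ℕ)+2) t)) t :=
    hF.comp_hasDerivAt (f := fun τ => ((c τ, V τ) : F × (Fin K → F))) t hcur
  -- identify the functions
  have hfun : (fun τ => inducedM Γ (n+1) (c τ) (fun m => uD c m τ))
      = fun τ => Phi Γ K (n+1) (c τ, V τ) := by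
    funext τ
    exact inducedM_eq_phi Γ (n+1) K (by omega) (c τ) (fun m => uD c m τ)
  -- identify the derivative value
  have htup1 : tup K (V t) 1 = uD c 1 t := by
    rw [tup_eq le_rfl (by omega)]
  have hdir : fderiv ℝ (Phi Γ K (n+1)) (c t, V t)
        (uD c 1 t, fun l : Fin K => ((((l:ℕ)+2:ℕ)):ℝ) • uD c ((l:ℕ)+2) t)
      = fderiv ℝ (Phi Γ K (n+1)) (c t, V t)
        (tup K (V t) 1, fun l : Fin K =>
          if (l:ℕ) + 2 ≤ n + 2 then (((l:ℕ) + 2 : ℕ) : ℝ) • tup K (V t) ((l:ℕ)+2) else 0) := by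
    rw [htup1]
    refine fderiv_phi_dir_congr Γ hO hPhi (hmapsO t ht) (V t) _ _ _ fun l hl => ?_
    rw [if_pos (by omega : (l:ℕ) + 2 ≤ n + 2)]
    rw [tup_eq (by omega) (by omega : (l:ℕ) + 2 ≤ K)]
    have : V t ⟨(l:ℕ) + 2 - 1, by omega⟩ = uD c ((l:ℕ)+2) t :=
      congrArg (fun r => uD c r t) (show ((l:ℕ)+2-1)+1 = (l:ℕ)+2 by omega)
    rw [this]
  have hrep := phi_rep Γ (le_rfl : n + 2 ≤ K) hO hPhi (hmapsO t ht) (V t)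
  have hsolve : fderiv ℝ (Phi Γ K (n+1)) (c t, V t)
        (tup K (V t) 1, fun l : Fin K =>
          if (l:ℕ) + 2 ≤ n + 2 then (((l:ℕ) + 2 : ℕ) : ℝ) • tup K (V t) ((l:ℕ)+2) else 0)
      = (((n+2:ℕ)):ℝ) • Phi Γ K (n+2) (c t, V t)
        - (Γ (c t) (tup K (V t) 1)).comp (Phi Γ K (n+1) (c t, V t)) := by
    rw [hrep, smul_smul, mul_inv_cancel₀ (show (((n+2:ℕ)):ℝ) ≠ 0 by positivity), one_smul]
    exact (add_sub_cancel_right _ _).symm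
  have hphi1 : Phi Γ K (n+1) (c t, V t) = inducedM Γ (n+1) (c t) (fun m => uD c m t) :=
    (inducedM_eq_phi Γ (n+1) K (by omega) (c t) (fun m => uD c m t)).symm
  have hphi2 : Phi Γ K (n+2) (c t, V t) = inducedM Γ (n+2) (c t) (fun m => uD c m t) :=
    (inducedM_eq_phi Γ (n+2) K le_rfl (c t) (fun m => uD c m t)).symm
  rw [hfun]
  rw [hdir, hsolve, hphi1, hphi2, htup1] at hcomp
  exact hcomp

end TkgAux3

namespace TkgAux3
open TkgAux TkgAux2
variable {F : Type*} [NormedAddCommGroup F] [NormedSpace ℝ F]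
variable {c : ℝ → F} {s : Set ℝ}

/-- the geodesic-type combination of derivatives of a curve -/
noncomputable def hseq (Γ : F → F →L[ℝ] F →L[ℝ] F) (c : ℝ → F) (i : ℕ) (t : ℝ) : F :=
  (i:ℝ) • uD c i t + ∑ j ∈ Finset.Icc 1 (i-1),
    (inducedM Γ j (c t) (fun m => uD c m t)) ((((i-j:ℕ)):ℝ) • uD c (i-j) t)

variable (Γ : F → F →L[ℝ] F →L[ℝ] F) {O : Set F}

lemma hasDerivAt_hseq (hs : IsOpen s) (hc : ContDiffOn ℝ (⊤:ℕ∞) c s)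
    (hO : IsOpen O) (hΓ : ContDiffOn ℝ (⊤:ℕ∞) Γ O) (hmapsO : ∀ t ∈ s, c t ∈ O)
    (i : ℕ) (hi : 1 ≤ i) {t : ℝ} (ht : t ∈ s) :
    HasDerivAt (hseq Γ c i)
      ((i:ℝ) • hseq Γ c (i+1) t - (Γ (c t) (uD c 1 t)) (hseq Γ c i t)) t := by
  classical
  set u : ℕ → F := fun m => uD c m t with hu
  set A : ℕ → (F →L[ℝ] F) := fun j => inducedM Γ j (c t) (fun m => uD c m t) with hAdef
  set B : F →L[ℝ] F := Γ (c t) (uD c 1 t) with hBdef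
  have hAder : ∀ j, 1 ≤ j → HasDerivAt (fun τ => inducedM Γ j (c τ) (fun m => uD c m τ))
      ((((j+1:ℕ)):ℝ) • A (j+1) - B.comp (A j)) t := by
    intro j hj
    obtain ⟨n, rfl⟩ : ∃ n, j = n + 1 := ⟨j - 1, by omega⟩
    exact hasDerivAt_inducedM_curve Γ hs hc hO hΓ hmapsO n ht
  have hterm : ∀ j ∈ Finset.Icc 1 (i-1),
      HasDerivAt (fun τ =>
          (inducedM Γ j (c τ) (fun m => uD c m τ)) ((((i-j:ℕ)):ℝ) • uD c (i-j) τ))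
        (((((j+1:ℕ)):ℝ) • A (j+1) - B.comp (A j)) ((((i-j:ℕ)):ℝ) • u (i-j))
          + (A j) ((((i-j:ℕ)):ℝ) • ((((i-j)+1:ℕ)):ℝ) • u ((i-j)+1))) t := by
    intro j hj
    rw [Finset.mem_Icc] at hj
    exact (hAder j hj.1).clm_apply
      ((hasDerivAt_uD hs hc (i-j) ht).const_smul ((((i-j:ℕ)):ℝ)))
  have htotal : HasDerivAt (hseq Γ c i)
      ((i:ℝ) • ((((i+1:ℕ)):ℝ) • u (i+1))
        + ∑ j ∈ Finset.Icc 1 (i-1),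
          (((((j+1:ℕ)):ℝ) • A (j+1) - B.comp (A j)) ((((i-j:ℕ)):ℝ) • u (i-j))
            + (A j) ((((i-j:ℕ)):ℝ) • ((((i-j)+1:ℕ)):ℝ) • u ((i-j)+1)))) t := by
    exact ((hasDerivAt_uD hs hc i ht).const_smul ((i:ℝ))).add (HasDerivAt.fun_sum hterm)
  convert htotal using 1
  -- it remains to prove the value identity
  set T1' : ℕ → F := fun m => (m:ℝ) • A m ((((i+1-m:ℕ)):ℝ) • u (i+1-m)) with hT1def
  set T3' : ℕ → F := fun m => A m ((((i-m:ℕ)):ℝ) • (((i+1-m:ℕ)):ℝ) • u (i+1-m)) with hT3def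
  have hsplit : (∑ j ∈ Finset.Icc 1 (i-1),
        (((((j+1:ℕ)):ℝ) • A (j+1) - B.comp (A j)) ((((i-j:ℕ)):ℝ) • u (i-j))
          + (A j) ((((i-j:ℕ)):ℝ) • ((((i-j)+1:ℕ)):ℝ) • u ((i-j)+1))))
      = ((∑ j ∈ Finset.Icc 1 (i-1), (((j+1:ℕ)):ℝ) • A (j+1) ((((i-j:ℕ)):ℝ) • u (i-j)))
          - ∑ j ∈ Finset.Icc 1 (i-1), B ((A j) ((((i-j:ℕ)):ℝ) • u (i-j))))
        + ∑ j ∈ Finset.Icc 1 (i-1), (A j) ((((i-j:ℕ)):ℝ) • ((((i-j)+1:ℕ)):ℝ) • u ((i-j)+1)) := by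
    rw [← Finset.sum_sub_distrib, ← Finset.sum_add_distrib]
    refine Finset.sum_congr rfl fun j hj => ?_
    rw [ContinuousLinearMap.sub_apply, ContinuousLinearMap.smul_apply,
      ContinuousLinearMap.comp_apply]
  have himg : Finset.Icc 2 i = Finset.image (· + 1) (Finset.Icc 1 (i-1)) := by
    rw [Finset.image_add_right_Icc]
    congr 1
    omega
  have hS1 : (∑ j ∈ Finset.Icc 1 (i-1), (((j+1:ℕ)):ℝ) • A (j+1) ((((i-j:ℕ)):ℝ) • u (i-j)))
      = ∑ m ∈ Finset.Icc 2 i, T1' m := by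
    rw [himg, Finset.sum_image (fun a _ b _ h => by omega)]
    refine Finset.sum_congr rfl fun j hj => ?_
    rw [Finset.mem_Icc] at hj
    rw [hT1def]
    have e : i + 1 - (j + 1) = i - j := by omega
    simp only [e]
  have hins1 : Finset.Icc 1 i = insert 1 (Finset.Icc 2 i) := by
    ext a
    simp only [Finset.mem_Icc, Finset.mem_insert]
    omega
  have h1notin : (1:ℕ) ∉ Finset.Icc 2 i := by simp
  have hT1one : T1' 1 = B ((i:ℝ) • u i) := by
    simp only [hT1def, Nat.cast_one, one_smul, Nat.add_sub_cancel]
    rfl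
  have hS3 : (∑ j ∈ Finset.Icc 1 (i-1),
        (A j) ((((i-j:ℕ)):ℝ) • ((((i-j)+1:ℕ)):ℝ) • u ((i-j)+1)))
      = ∑ j ∈ Finset.Icc 1 i, T3' j := by
    have hins2 : Finset.Icc 1 i = insert i (Finset.Icc 1 (i-1)) := by
      ext a
      simp only [Finset.mem_Icc, Finset.mem_insert]
      omega
    have hinotin : i ∉ Finset.Icc 1 (i-1) := by
      simp only [Finset.mem_Icc]
      omega
    have hT3i : T3' i = 0 := by
      rw [hT3def]
      show A i ((((i-i:ℕ)):ℝ) • _) = 0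
      rw [Nat.sub_self, Nat.cast_zero, zero_smul, map_zero]
    rw [hins2, Finset.sum_insert hinotin, hT3i, zero_add]
    refine Finset.sum_congr rfl fun j hj => ?_
    rw [Finset.mem_Icc] at hj
    rw [hT3def]
    have e : (i - j) + 1 = i + 1 - j := by omega
    simp only [e]
  have hmain : (∑ j ∈ Finset.Icc 1 i, (i:ℝ) • A j ((((i+1-j:ℕ)):ℝ) • u (i+1-j)))
      = (∑ j ∈ Finset.Icc 1 i, T1' j) + ∑ j ∈ Finset.Icc 1 i, T3' j := by
    rw [← Finset.sum_add_distrib]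
    refine Finset.sum_congr rfl fun j hj => ?_
    rw [Finset.mem_Icc] at hj
    rw [hT1def, hT3def]
    simp only [map_smul, smul_smul]
    rw [← add_smul]
    congr 1
    have hb : (((i-j:ℕ)):ℝ) = (i:ℝ) - (j:ℝ) := by
      rw [Nat.cast_sub hj.2]
    rw [hb]
    ring
  have e1 : hseq Γ c (i+1) t = (((i+1:ℕ)):ℝ) • u (i+1)
      + ∑ j ∈ Finset.Icc 1 i, A j ((((i+1-j:ℕ)):ℝ) • u (i+1-j)) := rfl
  have e0 : hseq Γ c i t = (i:ℝ) • u i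
      + ∑ j ∈ Finset.Icc 1 (i-1), A j ((((i-j:ℕ)):ℝ) • u (i-j)) := rfl
  rw [e1, e0, smul_add, map_add, map_sum, hsplit, hS1, hS3]
  have hsmulsum : (i:ℝ) • (∑ j ∈ Finset.Icc 1 i, A j ((((i+1-j:ℕ)):ℝ) • u (i+1-j)))
      = ∑ j ∈ Finset.Icc 1 i, (i:ℝ) • A j ((((i+1-j:ℕ)):ℝ) • u (i+1-j)) := Finset.smul_sum
  rw [hsmulsum, hmain, hins1, Finset.sum_insert h1notin, hT1one, map_smul]
  abel

end TkgAux3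

namespace TkgAux4
open TkgAux TkgAux2 TkgAux3
variable {F : Type*} [NormedAddCommGroup F] [NormedSpace ℝ F]

lemma hlenat (m : ℕ) : ((m : ℕ) : WithTop ℕ∞) ≤ ((⊤:ℕ∞) : WithTop ℕ∞) := by
  exact_mod_cast le_top

lemma iteratedDeriv_monomial (p : ℕ) (V : F) :
    ∀ m, iteratedDeriv m (fun t : ℝ => t ^ p • V)
      = fun t => ((p.descFactorial m : ℝ) * t ^ (p - m)) • V
  | 0 => by
      funext t
      rw [iteratedDeriv_zero, Nat.descFactorial_zero, Nat.sub_zero, Nat.cast_one, one_mul]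
  | (m+1) => by
      rw [iteratedDeriv_succ, iteratedDeriv_monomial p V m]
      funext t
      have hp : HasDerivAt (fun t : ℝ => t ^ (p-m)) (((p-m:ℕ):ℝ) * t^(p-m-1)) t :=
        hasDerivAt_pow _ _
      have h1 : HasDerivAt (fun t : ℝ => ((p.descFactorial m : ℝ) * t ^ (p - m)) • V)
          (((p.descFactorial m : ℝ) * (((p-m:ℕ):ℝ) * t ^ (p - m - 1))) • V) t :=
        (hp.const_mul ((p.descFactorial m : ℝ))).smul_const V
      rw [h1.deriv]
      congr 1
      rw [Nat.descFactorial_succ, Nat.sub_sub]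
      push_cast
      ring

lemma iteratedDeriv_monomial_zero (p m : ℕ) (V : F) (hm : 1 ≤ p) :
    iteratedDeriv m (fun t : ℝ => t ^ p • V) 0
      = if m = p then ((p.factorial : ℝ)) • V else 0 := by
  simp only [iteratedDeriv_monomial]
  rcases lt_trichotomy m p with h | h | h
  · rw [if_neg (by omega), zero_pow (by omega : p - m ≠ 0), mul_zero, zero_smul]
  · subst h
    rw [if_pos rfl, Nat.sub_self, pow_zero, mul_one, Nat.descFactorial_self]
  · rw [if_neg (by omega), (Nat.descFactorial_eq_zero_iff_lt).2 h]
    rw [Nat.cast_zero, zero_mul, zero_smul]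

lemma iteratedDeriv_const_succ (x : F) : ∀ m, iteratedDeriv (m+1) (fun _ : ℝ => x) = fun _ => 0
  | 0 => by
      rw [iteratedDeriv_succ, iteratedDeriv_zero]
      funext t
      exact deriv_const t x
  | (m+1) => by
      rw [iteratedDeriv_succ, iteratedDeriv_const_succ x m]
      funext t
      exact deriv_const t 0

lemma iteratedDeriv_add_my {f g : ℝ → F} (hf : ContDiff ℝ (⊤:ℕ∞) f) (hg : ContDiff ℝ (⊤:ℕ∞) g)
    (m : ℕ) (t : ℝ) :
    iteratedDeriv m (fun y => f y + g y) t = iteratedDeriv m f t + iteratedDeriv m g t := by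
  have h := iteratedDerivWithin_add (Set.mem_univ t) uniqueDiffOn_univ
    ((hf.of_le (hlenat m)).contDiffWithinAt) ((hg.of_le (hlenat m)).contDiffWithinAt)
  rw [iteratedDerivWithin_univ, iteratedDerivWithin_univ, iteratedDerivWithin_univ] at h
  exact h

variable (Γ : F → F →L[ℝ] F →L[ℝ] F) (x : F) (ξ : ℕ → F)

/-- the constant correction vector in step `n+2` of the canonical curve -/
noncomputable def Wv (n : ℕ) : F :=
  (((n + 2 : ℕ) : ℝ)) • ξ (n + 2)
    - ∑ j ∈ Finset.Icc 1 (n + 1),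
        (inducedM Γ j x
            (fun m => ((Nat.factorial m : ℝ))⁻¹ •
              iteratedDeriv m (canonCurve Γ x ξ (n + 1)) 0))
          (((Nat.factorial (n + 1 - j) : ℝ))⁻¹ •
            iteratedDeriv (n + 2 - j) (canonCurve Γ x ξ (n + 1)) 0)

lemma canonCurve_succ_succ (n : ℕ) :
    canonCurve Γ x ξ (n+2)
      = fun t => canonCurve Γ x ξ (n+1) t
          + t ^ (n+2) • ((((n + 2 : ℕ) : ℝ))⁻¹ • Wv Γ x ξ n) := by
  funext t
  show canonCurve Γ x ξ (n + 1) t + (t ^ (n + 2) / ((n + 2 : ℕ) : ℝ)) • Wv Γ x ξ n = _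
  rw [div_eq_mul_inv, mul_smul]

lemma contDiff_canonCurve : ∀ n, ContDiff ℝ (⊤:ℕ∞) (canonCurve Γ x ξ n)
  | 0 => contDiff_const
  | 1 => by
      show ContDiff ℝ (⊤:ℕ∞) fun t : ℝ => x + t • ξ 1
      exact contDiff_const.add (contDiff_id.smul contDiff_const)
  | (n+2) => by
      rw [canonCurve_succ_succ]
      exact (contDiff_canonCurve (n+1)).add
        (((contDiff_id.pow (n+2))).smul contDiff_const)

lemma canonCurve_zero_eq : ∀ n, canonCurve Γ x ξ n 0 = x
  | 0 => rfl
  | 1 => by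
      show x + (0:ℝ) • ξ 1 = x
      rw [zero_smul, add_zero]
  | (n+2) => by
      rw [canonCurve_succ_succ]
      show canonCurve Γ x ξ (n+1) 0 + (0:ℝ) ^ (n+2) • _ = x
      rw [canonCurve_zero_eq (n+1), zero_pow (by omega), zero_smul, add_zero]

/-- iterated derivatives at `0` of the canonical curve -/
noncomputable def Dv (n m : ℕ) : F := iteratedDeriv m (canonCurve Γ x ξ n) 0

lemma Dv_succ_eq (n m : ℕ) (hm : m ≠ n + 2) : Dv Γ x ξ (n+2) m = Dv Γ x ξ (n+1) m := by
  unfold Dv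
  rw [canonCurve_succ_succ]
  rw [iteratedDeriv_add_my (f := canonCurve Γ x ξ (n+1))
    (g := fun t : ℝ => t ^ (n+2) • ((((n + 2 : ℕ) : ℝ))⁻¹ • Wv Γ x ξ n))
    (contDiff_canonCurve Γ x ξ (n+1))
    (by exact (contDiff_id.pow (n+2)).smul contDiff_const) m 0]
  rw [iteratedDeriv_monomial_zero _ _ _ (by omega), if_neg hm, add_zero]

lemma Dv_stable (n m : ℕ) (h1 : 1 ≤ n) (hm : m ≤ n) :
    ∀ n', n ≤ n' → Dv Γ x ξ n' m = Dv Γ x ξ n m := by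
  intro n'
  induction n' with
  | zero => intro h; exact absurd h (by omega)
  | succ p IH =>
      intro hp
      rcases eq_or_lt_of_le hp with h | h
      · rw [h]
      · have hpn : n ≤ p := by omega
        have hp1 : 1 ≤ p := by omega
        obtain ⟨q, rfl⟩ : ∃ q, p = q + 1 := ⟨p - 1, by omega⟩
        rw [Dv_succ_eq Γ x ξ q m (by omega), IH (by omega)]

lemma Dv_vanish : ∀ n, 1 ≤ n → ∀ m, n < m → Dv Γ x ξ n m = 0
  | 0, h, _, _ => by omega
  | 1, _, m, hm => by
      unfold Dv
      show iteratedDeriv m (fun t : ℝ => x + t • ξ 1) 0 = 0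
      have e : (fun t : ℝ => x + t • ξ 1) = fun t : ℝ => (fun _ : ℝ => x) t + t ^ 1 • ξ 1 := by
        funext t; rw [pow_one]
      rw [e, iteratedDeriv_add_my (f := fun _ : ℝ => x) (g := fun t : ℝ => t ^ 1 • ξ 1)
        contDiff_const (by exact (contDiff_id.pow 1).smul contDiff_const) m 0]
      obtain ⟨m', rfl⟩ : ∃ m', m = m' + 1 := ⟨m - 1, by omega⟩
      rw [iteratedDeriv_const_succ, iteratedDeriv_monomial_zero _ _ _ le_rfl, if_neg (by omega)]
      rw [add_zero]
  | (n+2), _, m, hm => by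
      rw [Dv_succ_eq Γ x ξ n m (by omega), Dv_vanish (n+1) (by omega) m (by omega)]

lemma Dv_top (n : ℕ) :
    Dv Γ x ξ (n+2) (n+2) = (((n+1).factorial : ℝ)) • Wv Γ x ξ n := by
  unfold Dv
  rw [canonCurve_succ_succ]
  rw [iteratedDeriv_add_my (f := canonCurve Γ x ξ (n+1))
    (g := fun t : ℝ => t ^ (n+2) • ((((n + 2 : ℕ) : ℝ))⁻¹ • Wv Γ x ξ n))
    (contDiff_canonCurve Γ x ξ (n+1))
    (by exact (contDiff_id.pow (n+2)).smul contDiff_const) (n+2) 0]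
  have hv : iteratedDeriv (n+2) (canonCurve Γ x ξ (n+1)) 0 = 0 :=
    Dv_vanish Γ x ξ (n+1) (by omega) (n+2) (by omega)
  rw [hv, zero_add, iteratedDeriv_monomial_zero _ _ _ (by omega), if_pos rfl]
  rw [smul_smul]
  congr 1
  rw [show ((n:ℕ)+2).factorial = (n+2) * (n+1).factorial from Nat.factorial_succ (n+1)]
  push_cast
  rw [mul_comm (((n:ℝ)+2)) _, mul_assoc, mul_inv_cancel₀ (by positivity), mul_one]

end TkgAux4

namespace TkgAux4
open TkgAux TkgAux2 TkgAux3
variable {F : Type*} [NormedAddCommGroup F] [NormedSpace ℝ F]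

lemma hseq_one (Γ : F → F →L[ℝ] F →L[ℝ] F) (c : ℝ → F) (t : ℝ) :
    hseq Γ c 1 t = uD c 1 t := by
  unfold hseq
  rw [show (1:ℕ) - 1 = 0 from rfl, Finset.Icc_eq_empty (by omega), Finset.sum_empty,
    add_zero, Nat.cast_one, one_smul]

variable (Γ : F → F →L[ℝ] F →L[ℝ] F) (x : F) (ξ : ℕ → F)

lemma uD_one_zero (k : ℕ) (hk : 1 ≤ k) : uD (canonCurve Γ x ξ k) 1 0 = ξ 1 := by
  show (((1:ℕ).factorial:ℝ))⁻¹ • iteratedDeriv 1 (canonCurve Γ x ξ k) 0 = ξ 1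
  rw [Nat.factorial_one, Nat.cast_one, inv_one, one_smul]
  have h1 : iteratedDeriv 1 (canonCurve Γ x ξ k) 0 = Dv Γ x ξ 1 1 :=
    Dv_stable Γ x ξ 1 1 le_rfl le_rfl k hk
  rw [h1]
  show iteratedDeriv 1 (canonCurve Γ x ξ 1) 0 = ξ 1
  rw [iteratedDeriv_one]
  have hd : HasDerivAt (fun t : ℝ => x + t • ξ 1) (ξ 1) 0 := by
    have h := ((hasDerivAt_id (0:ℝ)).smul_const (ξ 1)).const_add x
    rw [one_smul] at h
    exact h
  show deriv (fun t : ℝ => x + t • ξ 1) 0 = ξ 1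
  exact hd.deriv

lemma star_M (k : ℕ) (i : ℕ) (h2 : 2 ≤ i) (hik : i ≤ k) :
    hseq Γ (canonCurve Γ x ξ k) i 0 = (i:ℝ) • ξ i := by
  obtain ⟨n, rfl⟩ : ∃ n, i = n + 2 := ⟨i - 2, by omega⟩
  set c := canonCurve Γ x ξ k with hc
  have hhead : (((n+2:ℕ)):ℝ) • uD c (n+2) 0 = Wv Γ x ξ n := by
    show (((n+2:ℕ)):ℝ) • ((((n+2).factorial:ℝ))⁻¹ • iteratedDeriv (n+2) c 0) = _
    have h1 : iteratedDeriv (n+2) c 0 = Dv Γ x ξ (n+2) (n+2) :=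
      Dv_stable Γ x ξ (n+2) (n+2) (by omega) le_rfl k hik
    rw [h1, Dv_top, smul_smul, smul_smul]
    have : (((n+2:ℕ)):ℝ) * (((n+2).factorial:ℝ))⁻¹ * (((n+1).factorial:ℝ)) = 1 := by
      rw [show ((n:ℕ)+2).factorial = (n+2) * (n+1).factorial from Nat.factorial_succ (n+1)]
      push_cast
      have h2 : ((n:ℝ)+2) ≠ 0 := by positivity
      have h3 : (((n+1).factorial:ℝ)) ≠ 0 := by positivity
      field_simp
    rw [this, one_smul]
  have hsum : (∑ j ∈ Finset.Icc 1 ((n+2)-1),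
        (inducedM Γ j (c 0) (fun m => uD c m 0)) ((((n+2-j:ℕ)):ℝ) • uD c (n+2-j) 0))
      = ∑ j ∈ Finset.Icc 1 (n+1),
        (inducedM Γ j x
            (fun m => ((Nat.factorial m : ℝ))⁻¹ •
              iteratedDeriv m (canonCurve Γ x ξ (n + 1)) 0))
          (((Nat.factorial (n + 1 - j) : ℝ))⁻¹ •
            iteratedDeriv (n + 2 - j) (canonCurve Γ x ξ (n + 1)) 0) := by
    refine Finset.sum_congr rfl fun j hj => ?_
    rw [Finset.mem_Icc] at hj
    have hop : inducedM Γ j (c 0) (fun m => uD c m 0)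
        = inducedM Γ j x
            (fun m => ((Nat.factorial m : ℝ))⁻¹ •
              iteratedDeriv m (canonCurve Γ x ξ (n + 1)) 0) := by
      rw [show c 0 = x from canonCurve_zero_eq Γ x ξ k]
      refine inducedM_congr Γ j x _ _ fun m hm hmj => ?_
      show ((m.factorial:ℝ))⁻¹ • iteratedDeriv m c 0 = _
      congr 1
      exact Dv_stable Γ x ξ (n+1) m (by omega) (by omega) k (by omega)
    rw [hop]
    congr 1
    show (((n+2-j:ℕ)):ℝ) • ((((n+2-j).factorial:ℝ))⁻¹ • iteratedDeriv (n+2-j) c 0) = _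
    have e1 : iteratedDeriv (n+2-j) c 0 = iteratedDeriv (n+2-j) (canonCurve Γ x ξ (n+1)) 0 :=
      Dv_stable Γ x ξ (n+1) (n+2-j) (by omega) (by omega) k (by omega)
    rw [e1, smul_smul]
    obtain ⟨a, ha⟩ : ∃ a, n + 2 - j = a + 1 := ⟨n + 1 - j, by omega⟩
    rw [show n + 1 - j = a from by omega, ha, fact_scalar a]
  show (((n+2:ℕ)):ℝ) • uD c (n+2) 0 + _ = (((n+2:ℕ)):ℝ) • ξ (n+2)
  rw [hhead, hsum]
  show Wv Γ x ξ n + _ = _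
  unfold Wv
  rw [sub_add_cancel]

end TkgAux4

open TkgAux TkgAux2 TkgAux3 TkgAux4 in
/-- **`T^k g` is linear on fibres in the adapted charts.**
Assume the order-1 compatibility condition for `Γ_M`, `Γ_N` along `g`. For the canonical
curve `μ̄` associated to `(x, ξ₁, …, ξ_k)`: `(g∘μ̄)(0) = g x`, `(g∘μ̄)'(0) = Dg(x)ξ₁`, and
for every `2 ≤ i ≤ k`
`(g∘μ̄)^(i)(0)/(i−1)! + N^1(v̄₁)(g∘μ̄)^(i−1)(0)/(i−2)! + ⋯ + N^{i−1}(v̄_{i−1})(g∘μ̄)^(1)(0) = i • Dg(x)ξ_i`;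
hence in the adapted vector-bundle charts `T^k g` is represented by
`(x,ξ₁,…,ξ_k) ↦ (g x, Dg(x)ξ₁, …, Dg(x)ξ_k)`, a vector bundle morphism. -/
theorem Tkg_vector_bundle_morphism
    {E E' : Type*} [NormedAddCommGroup E] [NormedSpace ℝ E]
    [NormedAddCommGroup E'] [NormedSpace ℝ E']
    (O : Set E) (O' : Set E') (hO : IsOpen O) (hO' : IsOpen O')
    (g : E → E') (hg : ContDiffOn ℝ (⊤ : ℕ∞) g O) (hmaps : Set.MapsTo g O O')
    (ΓM : E → (E →L[ℝ] E →L[ℝ] E)) (hΓM : ContDiffOn ℝ (⊤ : ℕ∞) ΓM O)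
    (ΓN : E' → (E' →L[ℝ] E' →L[ℝ] E')) (hΓN : ContDiffOn ℝ (⊤ : ℕ∞) ΓN O')
    (hcompat : ∀ x ∈ O, ∀ ξ y : E,
      fderiv ℝ g x (ΓM x ξ y)
        = fderiv ℝ (fderiv ℝ g) x ξ y
          + ΓN (g x) (fderiv ℝ g x ξ) (fderiv ℝ g x y))
    (k : ℕ) (hk : 1 ≤ k) (x : E) (hx : x ∈ O) (ξ : ℕ → E) :
    let μ : ℝ → E := canonCurve ΓM x ξ k
    let vbar : ℕ → E' := fun m =>
      ((Nat.factorial m : ℝ))⁻¹ • iteratedDeriv m (fun t => g (μ t)) 0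
    (g (μ 0) = g x) ∧
    (deriv (fun t => g (μ t)) 0 = fderiv ℝ g x (ξ 1)) ∧
    (∀ i : ℕ, 2 ≤ i → i ≤ k →
      ((Nat.factorial (i - 1) : ℝ))⁻¹ • iteratedDeriv i (fun t => g (μ t)) 0
        + (∑ j ∈ Finset.Icc 1 (i - 1),
            inducedM ΓN j (g (μ 0)) vbar
              (((Nat.factorial (i - j - 1) : ℝ))⁻¹ • iteratedDeriv (i - j) (fun t => g (μ t)) 0))
        = (i : ℝ) • fderiv ℝ g x (ξ i)) := by
  intro μ vbar
  set γ : ℝ → E' := fun t => g (μ t) with hγdef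
  have hcs : ContDiff ℝ (⊤:ℕ∞) μ := contDiff_canonCurve ΓM x ξ k
  set s : Set ℝ := μ ⁻¹' O with hsdef
  have hs : IsOpen s := hO.preimage hcs.continuous
  have h0 : μ 0 = x := canonCurve_zero_eq ΓM x ξ k
  have h0s : (0:ℝ) ∈ s := by
    show μ 0 ∈ O
    rw [h0]; exact hx
  have hmapsO : ∀ t ∈ s, μ t ∈ O := fun t ht => ht
  have hcμ : ContDiffOn ℝ (⊤:ℕ∞) μ s := hcs.contDiffOn
  have hγ : ContDiffOn ℝ (⊤:ℕ∞) γ s := by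
    exact hg.comp hcμ (fun t ht => ht)
  have hmapsO' : ∀ t ∈ s, γ t ∈ O' := fun t ht => hmaps (hmapsO t ht)
  have hgdiffAt : ∀ y ∈ O, HasFDerivAt g (fderiv ℝ g y) y := fun y hy =>
    ((hg.differentiableOn hle1).differentiableAt (hO.mem_nhds hy)).hasFDerivAt
  have hw1 : ∀ t ∈ s, HasDerivAt γ (fderiv ℝ g (μ t) (uD μ 1 t)) t := fun t ht =>
    (hgdiffAt (μ t) (hmapsO t ht)).comp_hasDerivAt t (hasDerivAt_c hs hcμ ht)
  have hw1' : ∀ t ∈ s, uD γ 1 t = fderiv ℝ g (μ t) (uD μ 1 t) := by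
    intro t ht
    show (((1:ℕ).factorial:ℝ))⁻¹ • iteratedDeriv 1 γ t = _
    rw [Nat.factorial_one, Nat.cast_one, inv_one, one_smul, iteratedDeriv_one]
    exact (hw1 t ht).deriv
  have key : ∀ i, 1 ≤ i → ∀ t ∈ s, hseq ΓN γ i t = fderiv ℝ g (μ t) (hseq ΓM μ i t) := by
    intro i
    induction i with
    | zero => intro h; exact absurd h (by omega)
    | succ n IH =>
      intro _ t ht
      rcases Nat.eq_zero_or_pos n with rfl | hn
      · rw [hseq_one, hseq_one]
        exact hw1' t ht
      · have hIH : ∀ τ ∈ s, hseq ΓN γ n τ = fderiv ℝ g (μ τ) (hseq ΓM μ n τ) :=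
          fun τ hτ => IH hn τ hτ
        have hN := hasDerivAt_hseq ΓN hs hγ hO' hΓN hmapsO' n hn ht
        have hM := hasDerivAt_hseq ΓM hs hcμ hO hΓM hmapsO n hn ht
        have hDg : HasFDerivAt (fderiv ℝ g) (fderiv ℝ (fderiv ℝ g) (μ t)) (μ t) :=
          (((hg.fderiv_of_isOpen hO hletop).differentiableOn hle1).differentiableAt
            (hO.mem_nhds (hmapsO t ht))).hasFDerivAt
        have hc' := hasDerivAt_c hs hcμ ht
        have hRight : HasDerivAt (fun τ => fderiv ℝ g (μ τ) (hseq ΓM μ n τ))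
            ((fderiv ℝ (fderiv ℝ g) (μ t)) (uD μ 1 t) (hseq ΓM μ n t)
              + fderiv ℝ g (μ t)
                  ((n:ℝ) • hseq ΓM μ (n+1) t - (ΓM (μ t) (uD μ 1 t)) (hseq ΓM μ n t))) t :=
          (hDg.comp_hasDerivAt t hc').clm_apply hM
        have hEv : (fun τ => fderiv ℝ g (μ τ) (hseq ΓM μ n τ)) =ᶠ[nhds t] hseq ΓN γ n := by
          filter_upwards [hs.mem_nhds ht] with τ hτ
          exact (hIH τ hτ).symm
        have hN' : HasDerivAt (fun τ => fderiv ℝ g (μ τ) (hseq ΓM μ n τ))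
            ((n:ℝ) • hseq ΓN γ (n+1) t - (ΓN (γ t) (uD γ 1 t)) (hseq ΓN γ n t)) t :=
          hN.congr_of_eventuallyEq hEv
        have huniq := hN'.unique hRight
        rw [map_sub, map_smul, hcompat (μ t) (hmapsO t ht) (uD μ 1 t) (hseq ΓM μ n t),
          hIH t ht, hw1' t ht] at huniq
        have hγt : γ t = g (μ t) := rfl
        rw [hγt] at huniq
        have halg : ((n:ℕ):ℝ) • hseq ΓN γ (n+1) t - (ΓN (g (μ t)) (fderiv ℝ g (μ t) (uD μ 1 t))
              (fderiv ℝ g (μ t) (hseq ΓM μ n t)))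
            = ((n:ℕ):ℝ) • fderiv ℝ g (μ t) (hseq ΓM μ (n+1) t)
              - (ΓN (g (μ t)) (fderiv ℝ g (μ t) (uD μ 1 t))
                (fderiv ℝ g (μ t) (hseq ΓM μ n t))) := by
          rw [huniq]
          abel
        have halg2 : ((n:ℕ):ℝ) • hseq ΓN γ (n+1) t
            = ((n:ℕ):ℝ) • fderiv ℝ g (μ t) (hseq ΓM μ (n+1) t) := sub_left_inj.mp halg
        have hne : ((n:ℕ):ℝ) ≠ 0 := by
          have : (0:ℝ) < ((n:ℕ):ℝ) := by exact_mod_cast hn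
          exact ne_of_gt this
        exact smul_right_injective E' hne halg2
  refine ⟨?_, ?_, ?_⟩
  · rw [h0]
  · have hd := (hw1 0 h0s).deriv
    rw [hd, h0, uD_one_zero ΓM x ξ k hk]
  · intro i h2 hik
    have e1 : ((Nat.factorial (i - 1) : ℝ))⁻¹ • iteratedDeriv i γ 0 = (i:ℝ) • uD γ i 0 := by
      show _ = (i:ℝ) • (((i.factorial:ℝ))⁻¹ • iteratedDeriv i γ 0)
      rw [smul_smul]
      congr 1
      obtain ⟨a, rfl⟩ : ∃ a, i = a + 1 := ⟨i - 1, by omega⟩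
      rw [show a + 1 - 1 = a from rfl]
      exact (fact_scalar a).symm
    have e2 : ∀ j ∈ Finset.Icc 1 (i-1),
        inducedM ΓN j (g (μ 0)) vbar
            (((Nat.factorial (i - j - 1) : ℝ))⁻¹ • iteratedDeriv (i - j) γ 0)
          = inducedM ΓN j (γ 0) (fun m => uD γ m 0) ((((i-j:ℕ)):ℝ) • uD γ (i-j) 0) := by
      intro j hj
      rw [Finset.mem_Icc] at hj
      have hvb : vbar = fun m => uD γ m 0 := rfl
      have hpt : g (μ 0) = γ 0 := rfl
      rw [hvb, hpt]
      congr 1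
      show _ = (((i-j:ℕ)):ℝ) • ((((i-j).factorial:ℝ))⁻¹ • iteratedDeriv (i-j) γ 0)
      rw [smul_smul]
      congr 1
      obtain ⟨a, ha⟩ : ∃ a, i - j = a + 1 := ⟨i - j - 1, by omega⟩
      rw [show i - j - 1 = a from by omega, ha]
      exact (fact_scalar a).symm
    rw [e1, Finset.sum_congr rfl e2]
    show hseq ΓN γ i 0 = (i : ℝ) • fderiv ℝ g x (ξ i)
    have hstar : hseq ΓM μ i 0 = (i:ℝ) • ξ i := star_M ΓM x ξ k i h2 hik
    rw [key i (by omega) 0 h0s, h0, hstar, map_smul]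
end

section
/- Fix (x, ξ_1, …, ξ_k) ∈ O × E^k and let μ̄ be the associated canonical curve. Then μ̄(0) = x, μ̄^(1)(0) = ξ_1, and for every 2 ≤ i ≤ k: (1/i)·[ μ̄^(i)(0)/(i−1)! + M^1(x,ξ_1)·μ̄^(i−1)(0)/(i−2)! + ⋯ + M^{i−1}(x, ξ_1, μ̄^(2)(0)/2!, …, μ̄^(i−1)(0)/(i−1)!)·μ̄^(1)(0) ] = ξ_i. (Thus μ̄ realizes the inverse of the adapted vector bundle trivialization Φ^k: its z-coordinates z^i([μ̄, x]_k) equal ξ_i.) -/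
section
variable {E : Type*} [NormedAddCommGroup E] [NormedSpace ℝ E]
  (Γ : E → (E →L[ℝ] E →L[ℝ] E)) (x : E) (ξ : ℕ → E)

lemma aux_iteratedDeriv_add {f g : ℝ → E} (hf : ContDiff ℝ (⊤:ℕ∞) f) (hg : ContDiff ℝ (⊤:ℕ∞) g)
    (m : ℕ) (t : ℝ) :
    iteratedDeriv m (fun s => f s + g s) t = iteratedDeriv m f t + iteratedDeriv m g t := by
  simp only [← iteratedDerivWithin_univ]
  apply iteratedDerivWithin_add (Set.mem_univ t) uniqueDiffOn_univ
    (hf.of_le (by exact_mod_cast le_top)).contDiffWithinAt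
  exact (hg.of_le (by exact_mod_cast le_top)).contDiffWithinAt

lemma aux_contDiff_pow_smul (n : ℕ) (w : E) : ContDiff ℝ (⊤:ℕ∞) (fun t : ℝ => t ^ n • w) :=
  (contDiff_id.pow n).smul contDiff_const

lemma aux_iteratedDeriv_pow_smul (m : ℕ) : ∀ (n : ℕ) (w : E),
    iteratedDeriv m (fun t : ℝ => t ^ n • w) 0
      = if m = n then (Nat.factorial n : ℝ) • w else 0 := by
  induction m with
  | zero =>
    intro n w
    cases n with
    | zero => simp
    | succ n => simp
  | succ m ih =>
    intro n w
    rw [iteratedDeriv_succ']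
    cases n with
    | zero =>
      have h1 : deriv (fun t : ℝ => t ^ 0 • w) = fun t : ℝ => t ^ 0 • (0 : E) := by
        funext t; simp
      rw [h1, ih 0 0]; simp
    | succ n =>
      have h1 : deriv (fun t : ℝ => t ^ (n+1) • w) = fun t : ℝ => t ^ n • (((n+1 : ℕ) : ℝ) • w) := by
        funext t
        rw [deriv_smul_const (differentiableAt_pow _), deriv_pow_field]
        simp [smul_smul]; ring_nf
      rw [h1, ih n _]
      by_cases h : m = n
      · subst h
        simp only [if_pos rfl, smul_smul]
        congr 1
        push_cast [Nat.factorial_succ]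
        ring
      · simp [h, Nat.succ_inj, h]

lemma aux_contDiff_canonCurve : ∀ n, ContDiff ℝ (⊤:ℕ∞) (canonCurve Γ x ξ n) := by
  intro n
  induction n with
  | zero => exact contDiff_const
  | succ n ih =>
    cases n with
    | zero =>
      show ContDiff ℝ (⊤:ℕ∞) fun t : ℝ => x + t • ξ 1
      exact contDiff_const.add (contDiff_id.smul contDiff_const)
    | succ n =>
      show ContDiff ℝ (⊤:ℕ∞) fun t : ℝ => canonCurve Γ x ξ (n+1) t + _
      exact ih.add (((contDiff_id.pow _).div_const _).smul contDiff_const)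

/-- rewrite the increment as a monomial -/
lemma aux_incr (n : ℕ) :
    canonCurve Γ x ξ (n+2)
      = fun t : ℝ => canonCurve Γ x ξ (n+1) t
          + t ^ (n+2) • ((((n + 2 : ℕ) : ℝ))⁻¹ •
            ((((n + 2 : ℕ) : ℝ)) • ξ (n + 2)
              - ∑ j ∈ Finset.Icc 1 (n + 1),
                  (inducedM Γ j x
                      (fun m => ((Nat.factorial m : ℝ))⁻¹ •
                        iteratedDeriv m (canonCurve Γ x ξ (n + 1)) 0))
                    (((Nat.factorial (n + 1 - j) : ℝ))⁻¹ •
                      iteratedDeriv (n + 2 - j) (canonCurve Γ x ξ (n + 1)) 0))) := by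
  funext t
  show canonCurve Γ x ξ (n+1) t + _ = _
  rw [smul_smul, div_eq_mul_inv]

lemma aux_stepA (n m : ℕ) (hm : m ≠ n + 2) :
    iteratedDeriv m (canonCurve Γ x ξ (n+2)) 0 = iteratedDeriv m (canonCurve Γ x ξ (n+1)) 0 := by
  rw [aux_incr, aux_iteratedDeriv_add (aux_contDiff_canonCurve Γ x ξ (n+1))
    (aux_contDiff_pow_smul _ _), aux_iteratedDeriv_pow_smul]
  simp [hm]

lemma aux_high (n : ℕ) : ∀ m, n < m → iteratedDeriv m (canonCurve Γ x ξ n) 0 = 0 := by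
  induction n with
  | zero =>
    intro m hm
    have h : (fun _ : ℝ => x) = fun t : ℝ => t ^ 0 • x := by funext t; simp
    show iteratedDeriv m (fun _ : ℝ => x) 0 = 0
    rw [h, aux_iteratedDeriv_pow_smul]
    have : m ≠ 0 := by omega
    simp [this]
  | succ n ih =>
    cases n with
    | zero =>
      intro m hm
      have h : (fun t : ℝ => x + t • ξ 1) = fun t : ℝ => t ^ 0 • x + t ^ 1 • ξ 1 := by
        funext t; simp
      show iteratedDeriv m (fun t : ℝ => x + t • ξ 1) 0 = 0
      rw [h, aux_iteratedDeriv_add (aux_contDiff_pow_smul _ _) (aux_contDiff_pow_smul _ _),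
        aux_iteratedDeriv_pow_smul, aux_iteratedDeriv_pow_smul]
      have h0 : m ≠ 0 := by omega
      have h1 : m ≠ 1 := by omega
      simp [h0, h1]
    | succ n =>
      intro m hm
      rw [aux_stepA Γ x ξ n m (by omega)]
      exact ih _ (by omega)

lemma aux_stable : ∀ K n m, m ≤ n → n ≤ K →
    iteratedDeriv m (canonCurve Γ x ξ K) 0 = iteratedDeriv m (canonCurve Γ x ξ n) 0 := by
  intro K
  induction K with
  | zero => intro n m h1 h2; interval_cases n; rfl
  | succ K ih =>
    intro n m h1 h2
    rcases Nat.lt_or_ge n (K+1) with h | h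
    · cases K with
      | zero =>
        interval_cases n
        interval_cases m
        show canonCurve Γ x ξ 1 0 = _
        show x + (0:ℝ) • ξ 1 = x
        simp
      | succ K =>
        rw [aux_stepA Γ x ξ K m (by omega)]
        exact ih n m h1 (by omega)
    · have : n = K + 1 := by omega
      subst this; rfl

lemma aux_top (n : ℕ) :
    iteratedDeriv (n+2) (canonCurve Γ x ξ (n+2)) 0
      = (Nat.factorial (n+1) : ℝ) •
          ((((n + 2 : ℕ) : ℝ)) • ξ (n + 2)
            - ∑ j ∈ Finset.Icc 1 (n + 1),
                (inducedM Γ j x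
                    (fun m => ((Nat.factorial m : ℝ))⁻¹ •
                      iteratedDeriv m (canonCurve Γ x ξ (n + 1)) 0))
                  (((Nat.factorial (n + 1 - j) : ℝ))⁻¹ •
                    iteratedDeriv (n + 2 - j) (canonCurve Γ x ξ (n + 1)) 0)) := by
  rw [aux_incr, aux_iteratedDeriv_add (aux_contDiff_canonCurve Γ x ξ (n+1))
    (aux_contDiff_pow_smul _ _), aux_iteratedDeriv_pow_smul,
    aux_high Γ x ξ (n+1) (n+2) (by omega)]
  rw [if_pos rfl, zero_add, smul_smul]
  congr 1
  rw [show (n:ℕ)+2 = (n+1)+1 from rfl, Nat.factorial_succ (n+1)]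
  push_cast
  have : ((n:ℝ) + 1 + 1) ≠ 0 := by positivity
  field_simp

lemma aux_inducedM_congr : ∀ (i : ℕ) (y : E) (η η' : ℕ → E),
    (∀ m, 1 ≤ m → m ≤ i → η m = η' m) → inducedM Γ i y η = inducedM Γ i y η' := by
  intro i
  induction i with
  | zero => intro y η η' h; rfl
  | succ i ih =>
    cases i with
    | zero =>
      intro y η η' h
      show Γ y (η 1) = Γ y (η' 1)
      rw [h 1 le_rfl le_rfl]
    | succ i =>
      intro y η η' h
      show (((i + 2 : ℕ) : ℝ))⁻¹ • _ = (((i + 2 : ℕ) : ℝ))⁻¹ • _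
      have h1 : η 1 = η' 1 := h 1 le_rfl (by omega)
      have hf : (fun x' => inducedM Γ (i + 1) x' η) = fun x' => inducedM Γ (i + 1) x' η' := by
        funext x'
        exact ih x' η η' (fun m hm1 hm2 => h m hm1 (by omega))
      have hsum : ∀ j ∈ Finset.Icc 2 (i+2),
          (fderiv ℝ (fun v => inducedM Γ (i + 1) y (Function.update η (j - 1) v)) (η (j - 1)))
              ((j : ℝ) • η j)
            = (fderiv ℝ (fun v => inducedM Γ (i + 1) y (Function.update η' (j - 1) v)) (η' (j - 1)))
              ((j : ℝ) • η' j) := by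
        intro j hj
        simp only [Finset.mem_Icc] at hj
        have hupd : (fun v => inducedM Γ (i + 1) y (Function.update η (j - 1) v))
            = fun v => inducedM Γ (i + 1) y (Function.update η' (j - 1) v) := by
          funext v
          apply ih
          intro m hm1 hm2
          rcases eq_or_ne m (j-1) with rfl | hne
          · simp
          · rw [Function.update_of_ne hne, Function.update_of_ne hne]
            exact h m hm1 (by omega)
        rw [hupd, h (j-1) (by omega) (by omega), h j (by omega) (by omega)]
      rw [h1, hf, Finset.sum_congr rfl hsum,
        ih y η η' (fun m hm1 hm2 => h m hm1 (by omega))]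
end

/-- **The canonical curve inverts the adapted trivialization.**
For the canonical curve `μ̄` associated to `(x, ξ₁, …, ξ_k)`: `μ̄ 0 = x`, `μ̄'(0) = ξ₁`,
and for every `2 ≤ i ≤ k` the `z`-coordinates of the adapted trivialization satisfy
`(1/i)[ μ̄^(i)(0)/(i−1)! + M^1(x,ξ₁) μ̄^(i−1)(0)/(i−2)! + ⋯ + M^{i−1}(x,ξ₁,μ̄⁽²⁾(0)/2!,…,μ̄^(i−1)(0)/(i−1)!) μ̄^(1)(0) ] = ξ_i`. -/
theorem canonCurve_realizes_trivialization
    {E : Type*} [NormedAddCommGroup E] [NormedSpace ℝ E]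
    (O : Set E) (hO : IsOpen O)
    (Γ : E → (E →L[ℝ] E →L[ℝ] E)) (hΓ : ContDiffOn ℝ (⊤ : ℕ∞) Γ O)
    (k : ℕ) (hk : 1 ≤ k) (x : E) (hx : x ∈ O) (ξ : ℕ → E) :
    let μ : ℝ → E := canonCurve Γ x ξ k
    let ν : ℕ → E := fun m => ((Nat.factorial m : ℝ))⁻¹ • iteratedDeriv m μ 0
    (μ 0 = x) ∧
    (deriv μ 0 = ξ 1) ∧
    (∀ i : ℕ, 2 ≤ i → i ≤ k →
      (i : ℝ)⁻¹ •
          (((Nat.factorial (i - 1) : ℝ))⁻¹ • iteratedDeriv i μ 0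
            + ∑ j ∈ Finset.Icc 1 (i - 1),
                inducedM Γ j x ν
                  (((Nat.factorial (i - j - 1) : ℝ))⁻¹ • iteratedDeriv (i - j) μ 0))
        = ξ i) := by
  intro μ ν
  refine ⟨?_, ?_, ?_⟩
  · have h := aux_stable Γ x ξ k 0 0 le_rfl (Nat.zero_le k)
    simp only [iteratedDeriv_zero] at h; exact h
  · have h := aux_stable Γ x ξ k 1 1 le_rfl hk
    rw [← iteratedDeriv_one] at *
    rw [show μ = canonCurve Γ x ξ k from rfl, h]
    have hc : canonCurve Γ x ξ 1 = fun t : ℝ => t ^ 0 • x + t ^ 1 • ξ 1 := by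
      funext t; show x + t • ξ 1 = _; simp
    rw [hc, aux_iteratedDeriv_add (aux_contDiff_pow_smul _ _) (aux_contDiff_pow_smul _ _),
      aux_iteratedDeriv_pow_smul, aux_iteratedDeriv_pow_smul]
    simp
  · intro i h2 hik
    obtain ⟨n, rfl⟩ : ∃ n, i = n + 2 := ⟨i - 2, by omega⟩
    have hstab : ∀ m, m ≤ n + 1 →
        iteratedDeriv m μ 0 = iteratedDeriv m (canonCurve Γ x ξ (n+1)) 0 := by
      intro m hm
      rw [show μ = canonCurve Γ x ξ k from rfl,
        aux_stable Γ x ξ k m m le_rfl (by omega),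
        ← aux_stable Γ x ξ (n+1) m m le_rfl hm]
    have hD : iteratedDeriv (n+2) μ 0
        = (Nat.factorial (n+1) : ℝ) •
            ((((n + 2 : ℕ) : ℝ)) • ξ (n + 2)
              - ∑ j ∈ Finset.Icc 1 (n + 1),
                  (inducedM Γ j x
                      (fun m => ((Nat.factorial m : ℝ))⁻¹ •
                        iteratedDeriv m (canonCurve Γ x ξ (n + 1)) 0))
                    (((Nat.factorial (n + 1 - j) : ℝ))⁻¹ •
                      iteratedDeriv (n + 2 - j) (canonCurve Γ x ξ (n + 1)) 0)) := by
      rw [show μ = canonCurve Γ x ξ k from rfl,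
        aux_stable Γ x ξ k (n+2) (n+2) le_rfl hik, aux_top]
    have hsum : ∑ j ∈ Finset.Icc 1 (n + 2 - 1),
          inducedM Γ j x ν
            (((Nat.factorial (n + 2 - j - 1) : ℝ))⁻¹ • iteratedDeriv (n + 2 - j) μ 0)
        = ∑ j ∈ Finset.Icc 1 (n + 1),
            (inducedM Γ j x
                (fun m => ((Nat.factorial m : ℝ))⁻¹ •
                  iteratedDeriv m (canonCurve Γ x ξ (n + 1)) 0))
              (((Nat.factorial (n + 1 - j) : ℝ))⁻¹ •
                iteratedDeriv (n + 2 - j) (canonCurve Γ x ξ (n + 1)) 0) := by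
      apply Finset.sum_congr rfl
      intro j hj
      simp only [Finset.mem_Icc] at hj
      have hM : inducedM Γ j x ν
          = inducedM Γ j x (fun m => ((Nat.factorial m : ℝ))⁻¹ •
              iteratedDeriv m (canonCurve Γ x ξ (n + 1)) 0) := by
        apply aux_inducedM_congr
        intro m hm1 hm2
        show ((Nat.factorial m : ℝ))⁻¹ • iteratedDeriv m μ 0 = _
        rw [hstab m (by omega)]
      have hidx : n + 2 - j - 1 = n + 1 - j := by omega
      rw [hM, hidx, hstab (n + 2 - j) (by omega)]
    rw [hsum, hD]
    have hfac : ((Nat.factorial (n + 2 - 1) : ℝ))⁻¹ = ((Nat.factorial (n+1) : ℝ))⁻¹ := rfl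
    rw [hfac, smul_smul, inv_mul_cancel₀ (by exact_mod_cast (Nat.factorial_ne_zero (n+1))),
      one_smul, sub_add_cancel, smul_smul]
    rw [inv_mul_cancel₀ (by exact_mod_cast Nat.succ_ne_zero (n+1)), one_smul]
end
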